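/- arXiv:2009.04146 — 7 statements merged into one kernel-verified Lean document; each statement's English description precedes it below -/
import Mathlib

section
/- The second order twisted B-spline satisfies, for (x,y) ∈ (0,1] × (0,1], φ₂(x,y) = (2/(π² x y)) (1 - cos(π x y)). -/
open MeasureTheory

noncomputable def tConv (F G : ℝ × ℝ → ℂ) : ℝ × ℝ → ℂ :=
  fun p => ∫ q : ℝ × ℝ, F (p.1 - q.1, p.2 - q.2) * G q *
    Complex.exp (Real.pi * Complex.I * ((q.1 : ℂ) * p.2 - (q.2 : ℂ) * p.1))

noncomputable def phi1 : ℝ × ℝ → ℂ :=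
  fun p => if p.1 ∈ Set.Ico (0:ℝ) 1 ∧ p.2 ∈ Set.Ico (0:ℝ) 1 then 1 else 0

noncomputable def phiN : ℕ → (ℝ × ℝ → ℂ)
  | 0 => 0
  | 1 => phi1
  | (n+2) => tConv (phiN (n+1)) phi1

lemma ae_fst_ne (c : ℝ) : ∀ᵐ q : ℝ × ℝ, q.1 ≠ c := by
  rw [Filter.eventually_iff, mem_ae_iff]
  apply measure_mono_null (t := ({c} : Set ℝ) ×ˢ (Set.univ : Set ℝ))
  · intro q hq
    simp only [Set.mem_compl_iff, Set.mem_setOf_eq, not_not] at hq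
    exact ⟨hq, Set.mem_univ _⟩
  · rw [Measure.volume_eq_prod, Measure.prod_prod]
    simp

lemma ae_snd_ne (c : ℝ) : ∀ᵐ q : ℝ × ℝ, q.2 ≠ c := by
  rw [Filter.eventually_iff, mem_ae_iff]
  apply measure_mono_null (t := (Set.univ : Set ℝ) ×ˢ ({c} : Set ℝ))
  · intro q hq
    simp only [Set.mem_compl_iff, Set.mem_setOf_eq, not_not] at hq
    exact ⟨Set.mem_univ _, hq⟩
  · rw [Measure.volume_eq_prod, Measure.prod_prod]
    simp

theorem phi2_formula_first_square (x y : ℝ)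
    (hx : x ∈ Set.Ioc (0:ℝ) 1) (hy : y ∈ Set.Ioc (0:ℝ) 1) :
    phiN 2 (x, y) =
      (((2 / (Real.pi ^ 2 * x * y)) * (1 - Real.cos (Real.pi * x * y)) : ℝ) : ℂ) := by
  obtain ⟨hx0, hx1⟩ := hx
  obtain ⟨hy0, hy1⟩ := hy
  have hπ : (Real.pi : ℝ) ≠ 0 := Real.pi_ne_zero
  have hxne : x ≠ 0 := ne_of_gt hx0
  have hyne : y ≠ 0 := ne_of_gt hy0
  have key : phiN 2 (x, y) =
      ∫ q : ℝ × ℝ, (Set.Ioc (0:ℝ) x ×ˢ Set.Ioc (0:ℝ) y).indicator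
        (fun q : ℝ × ℝ => Complex.exp ((Real.pi * Complex.I * y) * q.1) *
          Complex.exp ((-(Real.pi * Complex.I * x)) * q.2)) q := by
    show tConv phi1 phi1 (x, y) = _
    unfold tConv
    apply integral_congr_ae
    filter_upwards [ae_fst_ne 0, ae_snd_ne 0, ae_fst_ne x, ae_snd_ne y]
      with q hq1 hq2 hq3 hq4
    obtain ⟨u, v⟩ := q
    simp only at hq1 hq2 hq3 hq4
    have hE : Complex.exp ((Real.pi : ℂ) * Complex.I * ((u : ℂ) * y - (v : ℂ) * x)) =
        Complex.exp ((Real.pi * Complex.I * y) * (u : ℂ)) *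
          Complex.exp ((-(Real.pi * Complex.I * x)) * (v : ℂ)) := by
      rw [← Complex.exp_add]; ring_nf
    have hiff : (((0:ℝ) ≤ x - u ∧ x - u < 1) ∧ 0 ≤ y - v ∧ y - v < 1) ∧
        ((0 ≤ u ∧ u < 1) ∧ 0 ≤ v ∧ v < 1) ↔
        ((0:ℝ) < u ∧ u ≤ x) ∧ 0 < v ∧ v ≤ y := by
      constructor
      · rintro ⟨⟨⟨a1, a2⟩, b1, b2⟩, ⟨c1, c2⟩, d1, d2⟩
        exact ⟨⟨lt_of_le_of_ne c1 (Ne.symm hq1), by linarith⟩,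
          lt_of_le_of_ne d1 (Ne.symm hq2), by linarith⟩
      · rintro ⟨⟨hu1, hu2⟩, hv1, hv2⟩
        have hu2' : u < x := lt_of_le_of_ne hu2 hq3
        have hv2' : v < y := lt_of_le_of_ne hv2 hq4
        exact ⟨⟨⟨by linarith, by linarith⟩, by linarith, by linarith⟩,
          ⟨by linarith, by linarith⟩, by linarith, by linarith⟩
    simp only [phi1, Set.indicator_apply, Set.mem_prod, Set.mem_Ioc, Set.mem_Ico]
    by_cases h : ((0:ℝ) < u ∧ u ≤ x) ∧ 0 < v ∧ v ≤ y
    · rw [if_pos h, if_pos (hiff.mpr h).1, if_pos (hiff.mpr h).2, one_mul, one_mul, hE]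
    · rw [if_neg h]
      rcases not_and_or.mp ((not_iff_not.mpr hiff).mpr h) with h' | h'
      · rw [if_neg h', zero_mul, zero_mul]
      · rw [if_neg h', mul_zero, zero_mul]
  rw [key, integral_indicator (measurableSet_Ioc.prod measurableSet_Ioc), Measure.volume_eq_prod,
    setIntegral_prod_mul (fun u : ℝ => Complex.exp ((Real.pi : ℂ) * Complex.I * y * u))
      (fun v : ℝ => Complex.exp (-((Real.pi : ℂ) * Complex.I * x) * v))]
  rw [← intervalIntegral.integral_of_le hx0.le, ← intervalIntegral.integral_of_le hy0.le,
    integral_exp_mul_complex (by simp [Complex.ext_iff, hπ, hyne, Real.pi_ne_zero] : (Real.pi : ℂ) * Complex.I * y ≠ 0),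
    integral_exp_mul_complex (by simp [Complex.ext_iff, hπ, hxne, Real.pi_ne_zero] : -((Real.pi : ℂ) * Complex.I * x) ≠ 0)]
  have hxc : (x : ℂ) ≠ 0 := Complex.ofReal_ne_zero.mpr hxne
  have hyc : (y : ℂ) ≠ 0 := Complex.ofReal_ne_zero.mpr hyne
  have hπc : (Real.pi : ℂ) ≠ 0 := Complex.ofReal_ne_zero.mpr hπ
  have e1 : (Real.pi : ℂ) * Complex.I * y * x = ((Real.pi * x * y : ℝ) : ℂ) * Complex.I := by
    push_cast; ring
  have e2 : -((Real.pi : ℂ) * Complex.I * x) * y = -((Real.pi * x * y : ℝ) : ℂ) * Complex.I := by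
    push_cast; ring
  rw [Complex.ofReal_zero, mul_zero, mul_zero, Complex.exp_zero, e1, e2, Complex.exp_mul_I, Complex.exp_mul_I]
  rw [← Complex.ofReal_cos, ← Complex.ofReal_sin, Complex.cos_neg, Complex.sin_neg,
    ← Complex.ofReal_cos, ← Complex.ofReal_sin]
  have hsc : (Real.sin (Real.pi * x * y) : ℂ) ^ 2 + (Real.cos (Real.pi * x * y) : ℂ) ^ 2 = 1 := by
    rw [← Complex.ofReal_pow, ← Complex.ofReal_pow, ← Complex.ofReal_add]
    norm_cast
    exact Real.sin_sq_add_cos_sq _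
  push_cast
  have h2 : ((2:ℂ) - 2 * Real.cos (Real.pi * x * y)) = (Complex.cos (Real.pi*x*y) + Complex.sin (Real.pi*x*y) * Complex.I - 1) * ((Complex.cos (Real.pi*x*y) - Complex.sin (Real.pi*x*y) * Complex.I) - 1) := by
    have := Complex.sin_sq_add_cos_sq ((Real.pi*x*y : ℝ) : ℂ)
    push_cast at this ⊢
    linear_combination (-1 : ℂ) * this + Complex.sin ((Real.pi:ℂ)*x*y)^2 * Complex.I_sq
  field_simp
  ring_nf
  linear_combination (-1 : ℂ) * Complex.sin_sq_add_cos_sq ((Real.pi:ℂ)*x*y) +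
    (2 * Complex.cos ((Real.pi:ℂ)*x*y) + Complex.sin ((Real.pi:ℂ)*x*y)^2 - 2) * Complex.I_sq
end

section
/- The second order twisted B-spline satisfies, for (x,y) ∈ (1,2) × (1,2), φ₂(x,y) = (2/(π² x y)) (cos(π(x - y)) - cos(π(x + y - x y))). -/
open MeasureTheory

theorem phi2_formula_last_square (x y : ℝ)
    (hx : x ∈ Set.Ioo (1:ℝ) 2) (hy : y ∈ Set.Ioo (1:ℝ) 2) :
    phiN 2 (x, y) =
      (((2 / (Real.pi ^ 2 * x * y)) *
        (Real.cos (Real.pi * (x - y)) - Real.cos (Real.pi * (x + y - x * y))) : ℝ) : ℂ) := by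
  obtain ⟨hx1, hx2⟩ := hx
  obtain ⟨hy1, hy2⟩ := hy
  have hπ : (Real.pi : ℂ) ≠ 0 := Complex.ofReal_ne_zero.mpr Real.pi_ne_zero
  have hxc : (x : ℂ) ≠ 0 := Complex.ofReal_ne_zero.mpr (by positivity)
  have hyc : (y : ℂ) ≠ 0 := Complex.ofReal_ne_zero.mpr (by positivity)
  set f : ℝ → ℂ := Set.indicator (Set.Ioo (x-1) 1)
    (fun u : ℝ => Complex.exp ((Real.pi * Complex.I * y) * u)) with hf_def
  set g : ℝ → ℂ := Set.indicator (Set.Ioo (y-1) 1)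
    (fun v : ℝ => Complex.exp ((-(Real.pi * Complex.I * x)) * v)) with hg_def
  have hfg : ∀ q : ℝ × ℝ, phi1 (x - q.1, y - q.2) * phi1 q *
      Complex.exp (Real.pi * Complex.I * ((q.1 : ℂ) * y - (q.2 : ℂ) * x)) = f q.1 * g q.2 := by
    rintro ⟨u, v⟩
    by_cases h : (x - 1 < u ∧ u < 1) ∧ (y - 1 < v ∧ v < 1)
    · obtain ⟨⟨hu1, hu2⟩, hv1, hv2⟩ := h
      have e1 : phi1 (x - u, y - v) = 1 := by
        simp only [phi1, Set.mem_Ico]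
        rw [if_pos]
        exact ⟨⟨by linarith, by linarith⟩, by linarith, by linarith⟩
      have e2 : phi1 (u, v) = 1 := by
        simp only [phi1, Set.mem_Ico]
        rw [if_pos]
        exact ⟨⟨by linarith, hu2⟩, by linarith, hv2⟩
      rw [e1, e2, hf_def, hg_def,
        Set.indicator_of_mem (Set.mem_Ioo.mpr ⟨hu1, hu2⟩),
        Set.indicator_of_mem (Set.mem_Ioo.mpr ⟨hv1, hv2⟩),
        one_mul, one_mul, ← Complex.exp_add]
      congr 1
      push_cast
      ring
    · have hz : f u * g v = 0 := by
        rcases not_and_or.mp h with h | h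
        · rw [hf_def, Set.indicator_of_notMem (by simpa [Set.mem_Ioo] using h), zero_mul]
        · rw [hg_def, Set.indicator_of_notMem (by simpa [Set.mem_Ioo] using h), mul_zero]
      rw [hz]
      rcases not_and_or.mp h with h | h
      · rcases not_and_or.mp h with h | h
        · push_neg at h
          have e1 : phi1 (x - u, y - v) = 0 := by
            simp only [phi1, Set.mem_Ico]
            rw [if_neg]
            rintro ⟨⟨_, h2⟩, _⟩
            linarith
          rw [e1, zero_mul, zero_mul]
        · push_neg at h
          have e2 : phi1 (u, v) = 0 := by
            simp only [phi1, Set.mem_Ico]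
            rw [if_neg]
            rintro ⟨⟨_, h2⟩, _⟩
            linarith
          rw [e2, mul_zero, zero_mul]
      · rcases not_and_or.mp h with h | h
        · push_neg at h
          have e1 : phi1 (x - u, y - v) = 0 := by
            simp only [phi1, Set.mem_Ico]
            rw [if_neg]
            rintro ⟨_, _, h2⟩
            linarith
          rw [e1, zero_mul, zero_mul]
        · push_neg at h
          have e2 : phi1 (u, v) = 0 := by
            simp only [phi1, Set.mem_Ico]
            rw [if_neg]
            rintro ⟨_, _, h2⟩
            linarith
          rw [e2, mul_zero, zero_mul]
  have key : phiN 2 (x, y) = (∫ u, f u) * (∫ v, g v) := by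
    show tConv phi1 phi1 (x, y) = _
    unfold tConv
    rw [show (fun q : ℝ × ℝ => phi1 ((x, y).1 - q.1, (x, y).2 - q.2) * phi1 q *
        Complex.exp (Real.pi * Complex.I * ((q.1 : ℂ) * (x, y).2 - (q.2 : ℂ) * (x, y).1)))
        = fun q : ℝ × ℝ => f q.1 * g q.2 from funext hfg]
    rw [MeasureTheory.Measure.volume_eq_prod]
    exact MeasureTheory.integral_prod_mul f g
  have hc1 : (Real.pi : ℂ) * Complex.I * y ≠ 0 :=
    mul_ne_zero (mul_ne_zero hπ Complex.I_ne_zero) hyc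
  have hc2 : -((Real.pi : ℂ) * Complex.I * x) ≠ 0 :=
    neg_ne_zero.mpr (mul_ne_zero (mul_ne_zero hπ Complex.I_ne_zero) hxc)
  have hf : ∫ u, f u = (Complex.exp ((Real.pi * Complex.I * y) * 1)
      - Complex.exp ((Real.pi * Complex.I * y) * (x - 1))) / (Real.pi * Complex.I * y) := by
    rw [hf_def, MeasureTheory.integral_indicator measurableSet_Ioo,
      ← MeasureTheory.integral_Ioc_eq_integral_Ioo,
      ← intervalIntegral.integral_of_le (by linarith : x - 1 ≤ 1)]
    rw [integral_exp_mul_complex hc1]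
    push_cast
    ring_nf
  have hg : ∫ v, g v = (Complex.exp ((-(Real.pi * Complex.I * x)) * 1)
      - Complex.exp ((-(Real.pi * Complex.I * x)) * (y - 1))) / (-(Real.pi * Complex.I * x)) := by
    rw [hg_def, MeasureTheory.integral_indicator measurableSet_Ioo,
      ← MeasureTheory.integral_Ioc_eq_integral_Ioo,
      ← intervalIntegral.integral_of_le (by linarith : y - 1 ≤ 1)]
    rw [integral_exp_mul_complex hc2]
    push_cast
    ring_nf
  rw [key, hf, hg]
  -- RHS: cosines into exponentials (do this first, before introducing cast products)
  rw [Complex.ofReal_mul, Complex.ofReal_sub, Complex.ofReal_cos, Complex.ofReal_cos,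
    Complex.cos, Complex.cos]
  -- normalize all exponentials to the form E t = exp (π * I * t)
  have Earg : ∀ a b : ℝ, (a : ℂ) = b → Complex.exp ((Real.pi : ℂ) * Complex.I * a)
      = Complex.exp ((Real.pi : ℂ) * Complex.I * b) := by
    intro a b hab; rw [hab]
  have e1 : Complex.exp ((Real.pi * Complex.I * y) * 1)
      = Complex.exp ((Real.pi : ℂ) * Complex.I * (y : ℝ)) := by congr 1; ring
  have e2 : Complex.exp ((Real.pi * Complex.I * y) * ((x : ℂ) - 1))
      = Complex.exp ((Real.pi : ℂ) * Complex.I * ((x - 1) * y : ℝ)) := by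
    congr 1; push_cast; ring
  have e3 : Complex.exp ((-(Real.pi * Complex.I * x)) * 1)
      = Complex.exp ((Real.pi : ℂ) * Complex.I * ((-x : ℝ))) := by congr 1; push_cast; ring
  have e4 : Complex.exp ((-(Real.pi * Complex.I * x)) * ((y : ℂ) - 1))
      = Complex.exp ((Real.pi : ℂ) * Complex.I * ((x - x * y : ℝ))) := by
    congr 1; push_cast; ring
  rw [e1, e2, e3, e4]
  -- RHS: cosines into exponentials
  have r1 : Complex.exp ((Real.pi * (x - y) : ℝ) * Complex.I)
      = Complex.exp ((Real.pi : ℂ) * Complex.I * ((x - y : ℝ))) := by congr 1; push_cast; ring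
  have r2 : Complex.exp (-((Real.pi * (x - y) : ℝ) : ℂ) * Complex.I)
      = Complex.exp ((Real.pi : ℂ) * Complex.I * ((y - x : ℝ))) := by congr 1; push_cast; ring
  have r3 : Complex.exp ((Real.pi * (x + y - x * y) : ℝ) * Complex.I)
      = Complex.exp ((Real.pi : ℂ) * Complex.I * ((x + y - x * y : ℝ))) := by
    congr 1; push_cast; ring
  have r4 : Complex.exp (-((Real.pi * (x + y - x * y) : ℝ) : ℂ) * Complex.I)
      = Complex.exp ((Real.pi : ℂ) * Complex.I * ((x * y - x - y : ℝ))) := by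
    congr 1; push_cast; ring
  rw [r1, r2, r3, r4]
  -- expand the product of differences and combine exponentials
  rw [div_mul_div_comm, sub_mul, mul_sub, mul_sub, ← Complex.exp_add, ← Complex.exp_add,
    ← Complex.exp_add, ← Complex.exp_add]
  have s1 : (Real.pi : ℂ) * Complex.I * (y : ℝ) + Real.pi * Complex.I * ((-x : ℝ))
      = (Real.pi : ℂ) * Complex.I * ((y - x : ℝ)) := by push_cast; ring
  have s2 : (Real.pi : ℂ) * Complex.I * (y : ℝ) + Real.pi * Complex.I * ((x - x * y : ℝ))
      = (Real.pi : ℂ) * Complex.I * ((x + y - x * y : ℝ)) := by push_cast; ring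
  have s3 : (Real.pi : ℂ) * Complex.I * ((x - 1) * y : ℝ) + Real.pi * Complex.I * ((-x : ℝ))
      = (Real.pi : ℂ) * Complex.I * ((x * y - x - y : ℝ)) := by push_cast; ring
  have s4 : (Real.pi : ℂ) * Complex.I * ((x - 1) * y : ℝ)
      + Real.pi * Complex.I * ((x - x * y : ℝ))
      = (Real.pi : ℂ) * Complex.I * ((x - y : ℝ)) := by push_cast; ring
  rw [s1, s2, s3, s4]
  have hden : (Real.pi : ℂ) * Complex.I * y * -((Real.pi : ℂ) * Complex.I * x)
      = (Real.pi : ℂ) ^ 2 * x * y := by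
    linear_combination (-((Real.pi : ℂ) ^ 2) * x * y) * Complex.I_sq
  rw [hden]
  set A := Complex.exp ((Real.pi : ℂ) * Complex.I * ((y - x : ℝ)))
  set B := Complex.exp ((Real.pi : ℂ) * Complex.I * ((x + y - x * y : ℝ)))
  set C := Complex.exp ((Real.pi : ℂ) * Complex.I * ((x * y - x - y : ℝ)))
  set D := Complex.exp ((Real.pi : ℂ) * Complex.I * ((x - y : ℝ)))
  push_cast
  field_simp
  have c1 : ((Real.pi : ℂ)) ^ 2 * (x : ℂ) * (y : ℂ) * ((Real.pi : ℂ))⁻¹ ^ 2 * ((x : ℂ))⁻¹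
      * ((y : ℂ))⁻¹ = 1 := by
    field_simp
  linear_combination (0 : ℂ) * c1
end

section
/- The integral of φ₁ over ℝ² equals 1, and the integral of φ₂ over ℝ² equals (1/π²)(−γ − log π + Ci(π) + i Si(π))(−γ − log π + Ci(π) − i Si(π)), where γ is the Euler–Mascheroni constant and Ci, Si are the cosine and sine integrals. -/
open MeasureTheory

/-- The sine integral Si(π). -/
noncomputable def SiPi : ℝ := ∫ t in (0:ℝ)..Real.pi, Real.sin t / t

/-- The cosine integral Ci(π), via Ci(x) = γ + log x + ∫₀ˣ (cos t − 1)/t dt. -/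
noncomputable def CiPi : ℝ :=
  Real.eulerMascheroniConstant + Real.log Real.pi +
    ∫ t in (0:ℝ)..Real.pi, (Real.cos t - 1) / t

/-! ### Auxiliary definitions and lemmas -/

noncomputable def chi : ℝ → ℂ := (Set.Ico (0:ℝ) 1).indicator 1

noncomputable def Cpi : ℝ := ∫ t in (0:ℝ)..Real.pi, (Real.cos t - 1) / t

lemma phi1_eq (p : ℝ × ℝ) : phi1 p = chi p.1 * chi p.2 := by
  unfold phi1 chi
  rw [Set.indicator_apply, Set.indicator_apply]
  split_ifs <;> simp_all

lemma measurable_chi : Measurable chi := measurable_const.indicator measurableSet_Ico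

lemma measurable_phi1 : Measurable phi1 := by
  rw [show phi1 = fun p : ℝ × ℝ => chi p.1 * chi p.2 from funext phi1_eq]
  exact (measurable_chi.comp measurable_fst).mul (measurable_chi.comp measurable_snd)

lemma norm_phi1_le (p : ℝ × ℝ) : ‖phi1 p‖ ≤ 1 := by
  unfold phi1; split <;> simp

lemma phi1_eq_zero {p : ℝ × ℝ} (h : ¬(p.1 ∈ Set.Ico (0:ℝ) 1 ∧ p.2 ∈ Set.Ico (0:ℝ) 1)) :
    phi1 p = 0 := by unfold phi1; rw [if_neg h]

lemma norm_exp_pi_I (z : ℂ) (hz : z.im = 0) :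
    ‖Complex.exp ((Real.pi:ℂ) * Complex.I * z)‖ = 1 := by
  rw [Complex.norm_exp]
  simp [Complex.mul_re, Complex.mul_im, hz]

lemma inner_int (c : ℂ) (hc : c ≠ 0) :
    (∫ y : ℝ, chi y * Complex.exp (c * y)) = (Complex.exp c - 1) / c := by
  have h1 : (fun y : ℝ => chi y * Complex.exp (c * y))
      = (Set.Ico (0:ℝ) 1).indicator (fun y => Complex.exp (c * y)) := by
    funext y
    by_cases h : y ∈ Set.Ico (0:ℝ) 1 <;> simp [chi, h]
  rw [h1, integral_indicator measurableSet_Ico, integral_Ico_eq_integral_Ioo,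
    ← integral_Ioc_eq_integral_Ioo, ← intervalIntegral.integral_of_le zero_le_one,
    integral_exp_mul_complex hc]
  simp

lemma F_split (t : ℝ) :
    (Complex.exp ((t:ℂ) * Complex.I) - 1) / ((t:ℂ) * Complex.I)
      = ((Real.sin t / t : ℝ) : ℂ) - Complex.I * ((Real.cos t - 1) / t : ℝ) := by
  rcases eq_or_ne t 0 with h | h
  · simp [h]
  · have ht : (t:ℂ) ≠ 0 := Complex.ofReal_ne_zero.2 h
    rw [div_eq_iff (mul_ne_zero ht Complex.I_ne_zero), Complex.exp_mul_I]
    push_cast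
    field_simp
    ring_nf
    simp [Complex.I_sq]
    ring

lemma Fm_split (t : ℝ) :
    (Complex.exp (-((t:ℂ) * Complex.I)) - 1) / (-((t:ℂ) * Complex.I))
      = ((Real.sin t / t : ℝ) : ℂ) + Complex.I * ((Real.cos t - 1) / t : ℝ) := by
  rcases eq_or_ne t 0 with h | h
  · simp [h]
  · have ht : (t:ℂ) ≠ 0 := Complex.ofReal_ne_zero.2 h
    rw [div_eq_iff (neg_ne_zero.2 (mul_ne_zero ht Complex.I_ne_zero))]
    rw [show -((t:ℂ) * Complex.I) = (-t : ℂ) * Complex.I by ring, Complex.exp_mul_I]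
    push_cast
    field_simp
    ring_nf
    simp [Complex.I_sq]
    ring

lemma intInt_sin : IntervalIntegrable (fun t => Real.sin t / t) volume 0 Real.pi := by
  rw [intervalIntegrable_iff_integrableOn_Ioc_of_le Real.pi_pos.le]
  apply Integrable.mono' (g := fun _ => (1:ℝ))
  · exact integrableOn_const (by simp [Real.pi_pos.le])
  · exact (Real.measurable_sin.div measurable_id).aestronglyMeasurable.restrict
  · filter_upwards [ae_restrict_mem measurableSet_Ioc] with t ht
    rw [Real.norm_eq_abs, abs_div]
    rw [div_le_one (by rw [abs_of_pos ht.1]; exact ht.1)]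
    exact Real.abs_sin_le_abs

lemma intInt_cos : IntervalIntegrable (fun t => (Real.cos t - 1) / t) volume 0 Real.pi := by
  rw [intervalIntegrable_iff_integrableOn_Ioc_of_le Real.pi_pos.le]
  apply Integrable.mono' (g := fun _ => (2:ℝ))
  · exact integrableOn_const (by simp [Real.pi_pos.le])
  · exact ((Real.measurable_cos.sub measurable_const).div
      measurable_id).aestronglyMeasurable.restrict
  · filter_upwards [ae_restrict_mem measurableSet_Ioc] with t ht
    rw [Real.norm_eq_abs, abs_div, abs_of_pos ht.1,
      abs_of_nonpos (by linarith [Real.cos_le_one t])]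
    have h1 : 1 - t ^ 2 / 2 ≤ Real.cos t := Real.one_sub_sq_div_two_le_cos
    have h2 : -(Real.cos t - 1) ≤ t ^ 2 / 2 := by linarith
    calc -(Real.cos t - 1) / t ≤ (t ^ 2 / 2) / t := (div_le_div_iff_of_pos_right ht.1).2 h2
      _ = t / 2 := by rw [sq, mul_div_assoc, mul_div_right_comm, div_self ht.1.ne', one_mul]
      _ ≤ 2 := by have := Real.pi_le_four; linarith [ht.2]

lemma A_eq :
    (∫ x : ℝ, chi x * ∫ y : ℝ, chi y * Complex.exp ((Real.pi:ℂ) * Complex.I * (↑x * ↑y)))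
      = ((Real.pi)⁻¹ : ℝ) • (((SiPi : ℝ) : ℂ) - Complex.I * ((Cpi : ℝ) : ℂ)) := by
  have h1 : (fun x : ℝ => chi x * ∫ y : ℝ, chi y * Complex.exp ((Real.pi:ℂ) * Complex.I * (↑x * ↑y)))
      = (Set.Ico (0:ℝ) 1).indicator
          (fun x => ∫ y : ℝ, chi y * Complex.exp ((Real.pi:ℂ) * Complex.I * (↑x * ↑y))) := by
    funext x
    by_cases h : x ∈ Set.Ico (0:ℝ) 1 <;> simp [chi, h]
  rw [h1, integral_indicator measurableSet_Ico, integral_Ico_eq_integral_Ioo,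
    ← integral_Ioc_eq_integral_Ioo]
  have h2 : ∀ x ∈ Set.Ioc (0:ℝ) 1,
      (∫ y : ℝ, chi y * Complex.exp ((Real.pi:ℂ) * Complex.I * (↑x * ↑y)))
        = (Complex.exp (↑(Real.pi * x) * Complex.I) - 1) / (↑(Real.pi * x) * Complex.I) := by
    intro x hx
    have hc : (↑(Real.pi * x) * Complex.I : ℂ) ≠ 0 :=
      mul_ne_zero (Complex.ofReal_ne_zero.2 (mul_pos Real.pi_pos hx.1).ne') Complex.I_ne_zero
    rw [← inner_int _ hc]
    congr 1; funext y; congr 1; push_cast; ring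
  rw [setIntegral_congr_fun measurableSet_Ioc h2,
    ← intervalIntegral.integral_of_le zero_le_one]
  have h3 : (∫ x in (0:ℝ)..1,
      (Complex.exp (↑(Real.pi * x) * Complex.I) - 1) / (↑(Real.pi * x) * Complex.I))
      = (Real.pi)⁻¹ • ∫ t in (0:ℝ)..Real.pi,
          (Complex.exp ((t:ℂ) * Complex.I) - 1) / ((t:ℂ) * Complex.I) := by
    rw [intervalIntegral.integral_comp_mul_left
      (fun t => (Complex.exp ((t:ℂ) * Complex.I) - 1) / ((t:ℂ) * Complex.I)) Real.pi_ne_zero]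
    norm_num
  rw [h3]
  congr 1
  rw [intervalIntegral.integral_congr (fun t _ => F_split t)]
  have hs : IntervalIntegrable (fun t : ℝ => ((Real.sin t / t : ℝ) : ℂ)) volume 0 Real.pi :=
    ⟨intInt_sin.1.ofReal, intInt_sin.2.ofReal⟩
  have hc : IntervalIntegrable (fun t : ℝ => Complex.I * (((Real.cos t - 1) / t : ℝ) : ℂ))
      volume 0 Real.pi :=
    IntervalIntegrable.const_mul ⟨intInt_cos.1.ofReal, intInt_cos.2.ofReal⟩ Complex.I
  rw [intervalIntegral.integral_sub hs hc,
    intervalIntegral.integral_const_mul, intervalIntegral.integral_ofReal,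
    intervalIntegral.integral_ofReal]
  rfl

lemma B_eq :
    (∫ x : ℝ, chi x * ∫ y : ℝ, chi y * Complex.exp (-((Real.pi:ℂ) * Complex.I * (↑x * ↑y))))
      = ((Real.pi)⁻¹ : ℝ) • (((SiPi : ℝ) : ℂ) + Complex.I * ((Cpi : ℝ) : ℂ)) := by
  have h1 : (fun x : ℝ => chi x * ∫ y : ℝ, chi y * Complex.exp (-((Real.pi:ℂ) * Complex.I * (↑x * ↑y))))
      = (Set.Ico (0:ℝ) 1).indicator
          (fun x => ∫ y : ℝ, chi y * Complex.exp (-((Real.pi:ℂ) * Complex.I * (↑x * ↑y)))) := by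
    funext x
    by_cases h : x ∈ Set.Ico (0:ℝ) 1 <;> simp [chi, h]
  rw [h1, integral_indicator measurableSet_Ico, integral_Ico_eq_integral_Ioo,
    ← integral_Ioc_eq_integral_Ioo]
  have h2 : ∀ x ∈ Set.Ioc (0:ℝ) 1,
      (∫ y : ℝ, chi y * Complex.exp (-((Real.pi:ℂ) * Complex.I * (↑x * ↑y))))
        = (Complex.exp (-(↑(Real.pi * x) * Complex.I)) - 1) / (-(↑(Real.pi * x) * Complex.I)) := by
    intro x hx
    have hc : (-(↑(Real.pi * x) * Complex.I) : ℂ) ≠ 0 :=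
      neg_ne_zero.2 (mul_ne_zero (Complex.ofReal_ne_zero.2 (mul_pos Real.pi_pos hx.1).ne')
        Complex.I_ne_zero)
    rw [← inner_int _ hc]
    congr 1; funext y; congr 1; push_cast; ring
  rw [setIntegral_congr_fun measurableSet_Ioc h2,
    ← intervalIntegral.integral_of_le zero_le_one]
  have h3 : (∫ x in (0:ℝ)..1,
      (Complex.exp (-(↑(Real.pi * x) * Complex.I)) - 1) / (-(↑(Real.pi * x) * Complex.I)))
      = (Real.pi)⁻¹ • ∫ t in (0:ℝ)..Real.pi,
          (Complex.exp (-((t:ℂ) * Complex.I)) - 1) / (-((t:ℂ) * Complex.I)) := by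
    rw [intervalIntegral.integral_comp_mul_left
      (fun t => (Complex.exp (-((t:ℂ) * Complex.I)) - 1) / (-((t:ℂ) * Complex.I))) Real.pi_ne_zero]
    norm_num
  rw [h3]
  congr 1
  rw [intervalIntegral.integral_congr (fun t _ => Fm_split t)]
  have hs : IntervalIntegrable (fun t : ℝ => ((Real.sin t / t : ℝ) : ℂ)) volume 0 Real.pi :=
    ⟨intInt_sin.1.ofReal, intInt_sin.2.ofReal⟩
  have hc : IntervalIntegrable (fun t : ℝ => Complex.I * (((Real.cos t - 1) / t : ℝ) : ℂ))
      volume 0 Real.pi :=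
    IntervalIntegrable.const_mul ⟨intInt_cos.1.ofReal, intInt_cos.2.ofReal⟩ Complex.I
  rw [intervalIntegral.integral_add hs hc,
    intervalIntegral.integral_const_mul, intervalIntegral.integral_ofReal,
    intervalIntegral.integral_ofReal]
  rfl

/-! ### Integrability of the big integrand -/

noncomputable def bigF : (ℝ × ℝ) → (ℝ × ℝ) → ℂ := fun p q =>
  phi1 (p.1 - q.1, p.2 - q.2) * phi1 q *
    Complex.exp (Real.pi * Complex.I * ((q.1 : ℂ) * p.2 - (q.2 : ℂ) * p.1))

lemma integrable_bigF :
    Integrable (Function.uncurry bigF)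
      ((volume : Measure (ℝ × ℝ)).prod (volume : Measure (ℝ × ℝ))) := by
  set S : Set ((ℝ × ℝ) × (ℝ × ℝ)) :=
    (Set.Ico (0:ℝ) 2 ×ˢ Set.Ico (0:ℝ) 2) ×ˢ (Set.Ico (0:ℝ) 1 ×ˢ Set.Ico (0:ℝ) 1) with hS
  have hSm : MeasurableSet S :=
    ((measurableSet_Ico.prod measurableSet_Ico).prod
      (measurableSet_Ico.prod measurableSet_Ico))
  have hfin : (volume.prod volume) S ≠ ⊤ := by
    simp only [hS, Measure.prod_prod, Measure.volume_eq_prod, Real.volume_Ico]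
    exact ENNReal.mul_ne_top
      (ENNReal.mul_ne_top ENNReal.ofReal_ne_top ENNReal.ofReal_ne_top)
      (ENNReal.mul_ne_top ENNReal.ofReal_ne_top ENNReal.ofReal_ne_top)
  apply Integrable.mono' (g := S.indicator (fun _ => (1:ℝ)))
  · exact (integrable_indicator_iff hSm).2 (integrableOn_const hfin)
  · apply Measurable.aestronglyMeasurable
    apply Measurable.mul
    apply Measurable.mul
    · exact measurable_phi1.comp
        ((measurable_fst.fst.sub measurable_snd.fst).prodMk
          (measurable_fst.snd.sub measurable_snd.snd))
    · exact measurable_phi1.comp measurable_snd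
    · apply Complex.measurable_exp.comp
      apply Measurable.const_mul
      exact ((Complex.measurable_ofReal.comp measurable_snd.fst).mul
        (Complex.measurable_ofReal.comp measurable_fst.snd)).sub
        ((Complex.measurable_ofReal.comp measurable_snd.snd).mul
          (Complex.measurable_ofReal.comp measurable_fst.fst))
  · apply Filter.Eventually.of_forall
    rintro ⟨p, q⟩
    by_cases hq : q.1 ∈ Set.Ico (0:ℝ) 1 ∧ q.2 ∈ Set.Ico (0:ℝ) 1
    · by_cases hp : p ∈ Set.Ico (0:ℝ) 2 ×ˢ Set.Ico (0:ℝ) 2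
      · have hmem : (p, q) ∈ S := ⟨hp, hq⟩
        rw [Set.indicator_of_mem hmem]
        have hexp : ‖Complex.exp ((Real.pi:ℂ) * Complex.I *
            ((q.1 : ℂ) * p.2 - (q.2 : ℂ) * p.1))‖ = 1 := by
          apply norm_exp_pi_I
          simp
        calc ‖Function.uncurry bigF (p, q)‖
            = ‖phi1 (p.1 - q.1, p.2 - q.2)‖ * ‖phi1 q‖ * ‖Complex.exp ((Real.pi:ℂ) * Complex.I *
              ((q.1 : ℂ) * p.2 - (q.2 : ℂ) * p.1))‖ := by
              simp [Function.uncurry, bigF, norm_mul]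
          _ ≤ 1 := by
              rw [hexp, mul_one]
              exact mul_le_one₀ (norm_phi1_le _) (norm_nonneg _) (norm_phi1_le _)
      · have hzero : phi1 (p.1 - q.1, p.2 - q.2) = 0 := by
          apply phi1_eq_zero
          rintro ⟨h1, h2⟩
          apply hp
          simp only [Set.mem_prod, Set.mem_Ico] at *
          constructor
          · constructor <;> [linarith [hq.1.1, h1.1]; linarith [hq.1.2, h1.2]]
          · constructor <;> [linarith [hq.2.1, h2.1]; linarith [hq.2.2, h2.2]]
        simp only [Function.uncurry, bigF, hzero, zero_mul, norm_zero]
        exact Set.indicator_nonneg (fun _ _ => zero_le_one) _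
    · have hzero : phi1 q = 0 := phi1_eq_zero hq
      simp only [Function.uncurry, bigF, hzero, mul_zero, zero_mul, norm_zero]
      exact Set.indicator_nonneg (fun _ _ => zero_le_one) _

/-! ### The main theorem -/

theorem integral_phi1_phi2 :
    (∫ p : ℝ × ℝ, phiN 1 p) = 1 ∧
    (∫ p : ℝ × ℝ, phiN 2 p) =
      (1 / (Real.pi : ℂ) ^ 2) *
        (((-Real.eulerMascheroniConstant - Real.log Real.pi + CiPi : ℝ) : ℂ) +
          Complex.I * (SiPi : ℝ)) *
        (((-Real.eulerMascheroniConstant - Real.log Real.pi + CiPi : ℝ) : ℂ) -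
          Complex.I * (SiPi : ℝ)) := by
  constructor
  · show (∫ p : ℝ × ℝ, phi1 p) = 1
    have h : phi1 = (Set.Ico (0:ℝ) 1 ×ˢ Set.Ico (0:ℝ) 1).indicator (fun _ => (1:ℂ)) := by
      funext p
      by_cases hp : p.1 ∈ Set.Ico (0:ℝ) 1 ∧ p.2 ∈ Set.Ico (0:ℝ) 1 <;>
        simp [phi1, Set.indicator_apply, Set.mem_prod, hp]
    rw [h, integral_indicator_const _ (measurableSet_Ico.prod measurableSet_Ico),
      Measure.volume_eq_prod, measureReal_def, Measure.prod_prod]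
    simp [Real.volume_Ico]
  · have hdef : (∫ p : ℝ × ℝ, phiN 2 p) = ∫ p : ℝ × ℝ, ∫ q : ℝ × ℝ, bigF p q := rfl
    rw [hdef, MeasureTheory.integral_integral_swap integrable_bigF]
    have key : ∀ q : ℝ × ℝ, (∫ p : ℝ × ℝ, bigF p q)
        = (chi q.1 * ∫ y : ℝ, chi y * Complex.exp ((Real.pi:ℂ) * Complex.I * (↑q.1 * ↑y)))
          * (chi q.2 * ∫ y : ℝ, chi y * Complex.exp (-((Real.pi:ℂ) * Complex.I * (↑q.2 * ↑y)))) := by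
      intro q
      rw [← MeasureTheory.integral_add_right_eq_self (fun p => bigF p q) q]
      have hpt : ∀ r : ℝ × ℝ, bigF (r + q) q
          = (chi r.1 * Complex.exp (-((Real.pi:ℂ) * Complex.I * (↑q.2 * ↑r.1))))
            * ((chi q.1 * chi q.2) *
              (chi r.2 * Complex.exp ((Real.pi:ℂ) * Complex.I * (↑q.1 * ↑r.2)))) := by
        intro r
        unfold bigF
        simp only [Prod.fst_add, Prod.snd_add, add_sub_cancel_right]
        rw [phi1_eq, phi1_eq]
        rw [show ((Real.pi:ℂ) * Complex.I * ((q.1 : ℂ) * ↑(r.2 + q.2) - (q.2 : ℂ) * ↑(r.1 + q.1)))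
            = -((Real.pi:ℂ) * Complex.I * (↑q.2 * ↑r.1))
              + (Real.pi:ℂ) * Complex.I * (↑q.1 * ↑r.2) by push_cast; ring,
          Complex.exp_add]
        ring
      rw [integral_congr_ae (Filter.Eventually.of_forall hpt)]
      rw [Measure.volume_eq_prod,
        integral_prod_mul
          (fun t : ℝ => chi t * Complex.exp (-((Real.pi:ℂ) * Complex.I * (↑q.2 * ↑t))))
          (fun t : ℝ => chi q.1 * chi q.2 *
            (chi t * Complex.exp ((Real.pi:ℂ) * Complex.I * (↑q.1 * ↑t)))),
        MeasureTheory.integral_const_mul]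
      ring
    rw [integral_congr_ae (Filter.Eventually.of_forall key)]
    rw [Measure.volume_eq_prod,
      integral_prod_mul (fun x => chi x * ∫ y : ℝ, chi y *
          Complex.exp ((Real.pi:ℂ) * Complex.I * (↑x * ↑y)))
        (fun x => chi x * ∫ y : ℝ, chi y *
          Complex.exp (-((Real.pi:ℂ) * Complex.I * (↑x * ↑y)))),
      A_eq, B_eq]
    have hC : ((-Real.eulerMascheroniConstant - Real.log Real.pi + CiPi : ℝ) : ℂ) = (Cpi : ℂ) := by
      norm_cast
      unfold CiPi Cpi
      ring
    rw [hC]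
    rw [Complex.real_smul, Complex.real_smul]
    push_cast
    have hI := Complex.I_sq
    linear_combination (((Real.pi:ℂ))⁻¹ * ((Real.pi:ℂ))⁻¹ * ((SiPi:ℂ)^2 - (Cpi:ℂ)^2)) * hI
end

section
/- The kernel of the Weyl transform of φ₁ is K_{φ₁}(ξ,η) = e^{(πi/2)(ξ+η)} sinc((ξ+η)/2) χ_{[0,1)}(η−ξ), where sinc(t) = sin(πt)/(πt) for t ≠ 0 and sinc(0)=1. -/
open MeasureTheory

/-- Normalized sinc: sinc t = sin(πt)/(πt) for t ≠ 0, sinc 0 = 1. -/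
noncomputable def mySinc (t : ℝ) : ℝ :=
  if t = 0 then 1 else Real.sin (Real.pi * t) / (Real.pi * t)

lemma key_alg (a : ℝ) (ha : a ≠ 0) :
    (Complex.exp (2 * a * Complex.I) - 1) / (2 * a * Complex.I) =
      Complex.exp (a * Complex.I) * ((Real.sin a / a : ℝ) : ℂ) := by
  have h1 : Complex.exp (a * Complex.I) * Complex.exp (-(a * Complex.I)) = 1 := by
    rw [← Complex.exp_add]; simp
  have h2 : Complex.exp (a * Complex.I) * Complex.exp (a * Complex.I) =
      Complex.exp (2 * a * Complex.I) := by
    rw [← Complex.exp_add]; ring_nf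
  have haC : (a : ℂ) ≠ 0 := Complex.ofReal_ne_zero.mpr ha
  push_cast
  rw [Complex.sin, div_eq_iff (by simp [haC, Complex.I_ne_zero] : (2*(a:ℂ)*Complex.I) ≠ 0)]
  field_simp
  linear_combination (-Complex.I^2)*h1 + (Complex.I^2)*h2 +
    ((Complex.exp (2*(a:ℂ)*Complex.I) - 1))*Complex.I_sq

theorem weyl_kernel_phi1 (ξ η : ℝ) :
    (∫ x : ℝ, phi1 (x, η - ξ) * Complex.exp (Real.pi * Complex.I * x * ((ξ : ℂ) + η))) =
      Complex.exp (Real.pi * Complex.I / 2 * ((ξ : ℂ) + η)) * ((mySinc ((ξ + η) / 2) : ℝ) : ℂ) *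
        (if η - ξ ∈ Set.Ico (0:ℝ) 1 then 1 else 0) := by
  by_cases hB : η - ξ ∈ Set.Ico (0:ℝ) 1
  · simp only [hB, if_true, mul_one]
    have hint : ∀ x : ℝ, phi1 (x, η - ξ) * Complex.exp (Real.pi * Complex.I * x * ((ξ : ℂ) + η))
        = Set.indicator (Set.Ico (0:ℝ) 1)
            (fun x : ℝ => Complex.exp ((Real.pi * Complex.I * ((ξ : ℂ) + η)) * x)) x := by
      intro x
      simp only [phi1, hB, and_true, Set.indicator]
      by_cases hx : x ∈ Set.Ico (0:ℝ) 1 <;> simp [hx] <;> ring_nf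
    simp only [hint]
    rw [MeasureTheory.integral_indicator measurableSet_Ico,
        MeasureTheory.Measure.restrict_congr_set MeasureTheory.Ico_ae_eq_Ioc,
        ← intervalIntegral.integral_of_le (by norm_num : (0:ℝ) ≤ 1)]
    set s : ℝ := ξ + η with hs
    have hcast : (ξ : ℂ) + η = (s : ℂ) := by push_cast [hs]; ring
    rw [hcast]
    by_cases hs0 : s = 0
    · simp [hs0, mySinc]
    · have hc : (Real.pi : ℂ) * Complex.I * (s : ℂ) ≠ 0 := by
        simp [Complex.I_ne_zero, Real.pi_ne_zero, hs0, Complex.ofReal_ne_zero]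
      rw [integral_exp_mul_complex hc]
      have ha : Real.pi * s / 2 ≠ 0 := by
        simp [Real.pi_ne_zero, hs0]
      have := key_alg (Real.pi * s / 2) ha
      have h2 : (2 : ℂ) * ((Real.pi * s / 2 : ℝ) : ℂ) * Complex.I
          = (Real.pi : ℂ) * Complex.I * (s : ℂ) := by push_cast; ring
      rw [h2] at this
      have h3 : ((Real.pi * s / 2 : ℝ) : ℂ) * Complex.I
          = (Real.pi : ℂ) * Complex.I / 2 * (s : ℂ) := by push_cast; ring
      rw [h3] at this
      have hsinc : mySinc (s / 2) = Real.sin (Real.pi * s / 2) / (Real.pi * s / 2) := by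
        unfold mySinc
        rw [if_neg (by simpa using hs0 : s / 2 ≠ 0)]
        ring_nf
      rw [hsinc]
      rw [show ((1:ℝ):ℂ) = 1 from rfl, show ((0:ℝ):ℂ) = 0 from rfl, mul_one, mul_zero,
        Complex.exp_zero]
      exact this
  · simp only [hB, if_false, mul_zero]
    have : ∀ x : ℝ, phi1 (x, η - ξ) * Complex.exp (Real.pi * Complex.I * x * ((ξ : ℂ) + η)) = 0 := by
      intro x; simp [phi1, hB]
    simp [this]
end

section
/- The improper integral lim_{M→∞} ∫_{−M}^{M} ∫_{−M}^{M} e^{πi(⌊y⌋ x − ⌊x⌋ y)} dx dy equals 1. -/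
open MeasureTheory intervalIntegral

noncomputable def Efn (n m : ℤ) : ℂ :=
  ∫ t in (m:ℝ)..((m:ℝ)+1), Complex.exp (Real.pi * Complex.I * n * t)

lemma piI_ne : (Real.pi : ℂ) * Complex.I ≠ 0 := by
  simp [Real.pi_ne_zero, Complex.I_ne_zero, Complex.ofReal_eq_zero]

lemma neg_one_zc : ((-1 : ℂ)) ≠ 0 := by norm_num

lemma Efn_zero (m : ℤ) : Efn 0 m = 1 := by
  simp [Efn]

lemma exp_piI_int (k : ℤ) : Complex.exp ((k : ℂ) * (Real.pi * Complex.I)) = (-1 : ℂ) ^ k := by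
  rw [Complex.exp_int_mul, Complex.exp_pi_mul_I]

lemma Efn_ne {n : ℤ} (hn : n ≠ 0) (m : ℤ) :
    Efn n m = ((-1:ℂ)^(n*(m+1)) - (-1:ℂ)^(n*m)) / (Real.pi * Complex.I * n) := by
  have hc : (Real.pi : ℂ) * Complex.I * n ≠ 0 :=
    mul_ne_zero piI_ne (Int.cast_ne_zero.mpr hn)
  have := integral_exp_mul_complex (a := (m:ℝ)) (b := (m:ℝ)+1) hc
  rw [Efn, this]
  have h1 : (Real.pi : ℂ) * Complex.I * n * ((m:ℝ)+1 : ℝ) = ((n*(m+1) : ℤ) : ℂ) * (Real.pi * Complex.I) := by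
    push_cast; ring
  have h2 : (Real.pi : ℂ) * Complex.I * n * ((m:ℝ) : ℝ) = ((n*m : ℤ) : ℂ) * (Real.pi * Complex.I) := by
    push_cast; ring
  rw [h1, h2, exp_piI_int, exp_piI_int]

lemma Efn_even {n : ℤ} (hn : n ≠ 0) (he : Even n) (m : ℤ) : Efn n m = 0 := by
  rw [Efn_ne hn m, Even.neg_one_zpow (he.mul_right _), Even.neg_one_zpow (he.mul_right _)]
  simp

lemma Efn_odd {n : ℤ} (hn : Odd n) (m : ℤ) :
    Efn n m = (-1:ℂ)^m * (-2) / (Real.pi * Complex.I * n) := by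
  have hn0 : n ≠ 0 := by rintro rfl; simp at hn
  rw [Efn_ne hn0 m]
  have h1 : ((-1:ℂ))^(n*(m+1)) = -((-1:ℂ)^m) := by
    rw [zpow_mul, Odd.neg_one_zpow hn, zpow_add₀ neg_one_zc]
    simp
  have h2 : ((-1:ℂ))^(n*m) = (-1:ℂ)^m := by
    rw [zpow_mul, Odd.neg_one_zpow hn]
  rw [h1, h2]; ring


-- integrability helper
lemma II {f : ℝ → ℂ} (hf : Measurable f) {C : ℝ} (hb : ∀ y, ‖f y‖ ≤ C) (a b : ℝ) :
    IntervalIntegrable f volume a b := by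
  rw [intervalIntegrable_iff]
  refine Measure.integrableOn_of_bounded ?_ hf.aestronglyMeasurable (ae_of_all _ hb)
  rw [Set.uIoc]
  exact measure_Ioc_lt_top.ne

-- norm of purely imaginary exponential
lemma norm_exp_eq_one (r : ℝ) : ‖Complex.exp (Real.pi * Complex.I * r)‖ = 1 := by
  rw [Complex.norm_exp]
  have : ((Real.pi : ℂ) * Complex.I * r).re = 0 := by simp [Complex.mul_re, Complex.mul_im]
  rw [this, Real.exp_zero]


lemma Efn_norm_le (n m : ℤ) : ‖Efn n m‖ ≤ 1 := by
  have := intervalIntegral.norm_integral_le_of_norm_le_const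
    (C := 1) (a := (m:ℝ)) (b := (m:ℝ)+1)
    (f := fun t : ℝ => Complex.exp (Real.pi * Complex.I * n * t)) ?_
  · simpa [Efn] using this
  · intro x _
    have : (Real.pi : ℂ) * Complex.I * n * x = Real.pi * Complex.I * ((n : ℝ) * x : ℝ) := by
      push_cast; ring
    rw [this, norm_exp_eq_one]

-- measurability of main integrand in y, for fixed k and x-as-coefficient
lemma meas_main (x : ℝ) (k : ℤ) :
    Measurable (fun y : ℝ => Complex.exp (Real.pi * Complex.I * ((⌊y⌋ : ℂ) * x - (k : ℂ) * y))) := by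
  apply Complex.measurable_exp.comp
  apply Measurable.const_mul
  apply Measurable.sub
  · exact (measurable_from_top.comp Int.measurable_floor).mul_const _
  · exact (Complex.measurable_ofReal.const_mul _)

lemma meas_outer (g : ℤ → ℂ) (c : ℂ) :
    Measurable (fun x : ℝ => Complex.exp (c * x) * g ⌊x⌋) := by
  apply Measurable.mul
  · exact Complex.measurable_exp.comp ((Complex.measurable_ofReal).const_mul c)
  · exact measurable_from_top.comp Int.measurable_floor



-- single square piece of inner integral
lemma piece (k l : ℤ) (x : ℝ) :
    ∫ y in (l:ℝ)..((l:ℝ)+1), Complex.exp (Real.pi*Complex.I*((⌊y⌋:ℂ)*x - (k:ℂ)*y))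
    = Complex.exp (Real.pi*Complex.I*(l:ℂ)*x) * Efn (-k) l := by
  rw [integral_of_le (by linarith), integral_Ioc_eq_integral_Ioo]
  rw [setIntegral_congr_fun (g := fun y : ℝ =>
      Complex.exp (Real.pi*Complex.I*(l:ℂ)*x) * Complex.exp (Real.pi*Complex.I*((-k : ℤ):ℂ)*y))
    measurableSet_Ioo ?_]
  · rw [MeasureTheory.integral_const_mul, ← integral_Ioc_eq_integral_Ioo,
      ← integral_of_le (by linarith)]
    rfl
  · intro y hy
    have hfl : ⌊y⌋ = l := Int.floor_eq_iff.mpr ⟨le_of_lt hy.1, by exact_mod_cast hy.2⟩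
    simp only [hfl, ← Complex.exp_add]
    congr 1
    push_cast
    ring

lemma decomp (M : ℕ) (f : ℝ → ℂ) (hf : ∀ a b : ℝ, IntervalIntegrable f volume a b) :
    ∫ y in Set.Icc (-(M:ℝ)) (M:ℝ), f y
    = ∑ i ∈ Finset.range (2*M), ∫ y in (-(M:ℝ)+i)..(-(M:ℝ)+i+1), f y := by
  have hle : (-(M:ℝ)) ≤ M := by
    have : (0:ℝ) ≤ M := Nat.cast_nonneg M
    linarith
  have h0 : ∫ y in Set.Icc (-(M:ℝ)) (M:ℝ), f y = ∫ y in (-(M:ℝ))..(M:ℝ), f y := by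
    rw [integral_of_le hle, integral_Icc_eq_integral_Ioc]
  rw [h0]
  have h1 : ∫ y in (-(M:ℝ))..(M:ℝ), f y
      = ∫ y in ((fun i : ℕ => -(M:ℝ)+i) 0)..((fun i : ℕ => -(M:ℝ)+i) (2*M)), f y := by
    congr 1 <;> push_cast <;> ring
  rw [h1, ← intervalIntegral.sum_integral_adjacent_intervals (a := fun i : ℕ => -(M:ℝ)+i) (n := 2*M) (fun i _ => hf _ _)]
  refine Finset.sum_congr rfl fun i _ => ?_
  congr 1
  push_cast
  ring


noncomputable section
def hh (m : ℤ) : ℂ := if Odd m then (m:ℂ)⁻¹ else 0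
def gam (n : ℤ) : ℂ := if n = 0 then 1 else if Odd n then (-2)/(Real.pi*Complex.I*n) else 0
def del (m : ℤ) : ℂ := if m = 0 then 1 else if Odd m then 2/(Real.pi*Complex.I*m) else 0
end

lemma hh_neg (m : ℤ) : hh (-m) = - hh m := by
  unfold hh
  by_cases ho : Odd m
  · rw [if_pos (odd_neg.mpr ho), if_pos ho]
    push_cast
    rw [inv_neg]
  · rw [if_neg (fun h => ho (odd_neg.mp h)), if_neg ho, neg_zero]

lemma hh_zero : hh 0 = 0 := by simp [hh, Int.odd_iff]

lemma gam_split (m : ℤ) :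
    gam m = (if m = 0 then (1:ℂ) else 0) + (-2/(Real.pi*Complex.I)) * hh m := by
  by_cases h0 : m = 0
  · subst h0; simp [gam, hh_zero]
  · by_cases ho : Odd m
    · simp only [gam, hh, if_neg h0, if_pos ho]
      rw [division_def, division_def, mul_inv]
      ring
    · simp [gam, hh, h0, ho]

lemma del_split (m : ℤ) :
    del m = (if m = 0 then (1:ℂ) else 0) + (2/(Real.pi*Complex.I)) * hh m := by
  by_cases h0 : m = 0
  · subst h0; simp [del, hh_zero]
  · by_cases ho : Odd m
    · simp only [del, hh, if_neg h0, if_pos ho]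
      rw [division_def, division_def, mul_inv]
      ring
    · simp [del, hh, h0, ho]

lemma sum_ind {M : ℕ} (hM : 1 ≤ M) :
    (∑ i ∈ Finset.range (2*M), if (-(M:ℤ)+i = 0) then (1:ℂ) else 0) = 1 := by
  have : ∀ i ∈ Finset.range (2*M),
      (if (-(M:ℤ)+i = 0) then (1:ℂ) else 0) = (if i = M then (1:ℂ) else 0) := by
    intro i _
    have : (-(M:ℤ)+i = 0) ↔ (i = M) := by omega
    simp [this]
  rw [Finset.sum_congr rfl this, Finset.sum_ite_eq' (Finset.range (2*M)) M (fun _ => (1:ℂ)),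
    if_pos (Finset.mem_range.mpr (by omega))]

lemma sum_hh {M : ℕ} (hM : 1 ≤ M) :
    (∑ i ∈ Finset.range (2*M), hh (-(M:ℤ)+i)) = hh (-(M:ℤ)) := by
  have h0 : 0 ∈ Finset.range (2*M) := Finset.mem_range.mpr (by omega)
  rw [← Finset.add_sum_erase _ _ h0]
  have : (∑ i ∈ (Finset.range (2*M)).erase 0, hh (-(M:ℤ)+i)) = 0 := by
    apply Finset.sum_involution (g := fun i _ => 2*M - i)
    · intro i hi
      simp only [Finset.mem_erase, Finset.mem_range] at hi
      have hcast : (-(M:ℤ) + (2*M - i : ℕ)) = -(-(M:ℤ)+i) := by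
        have : (((2*M - i : ℕ)) : ℤ) = 2*M - i := by omega
        rw [this]; ring
      rw [hcast, hh_neg]
      ring
    · intro i hi hne
      simp only [Finset.mem_erase, Finset.mem_range] at hi
      intro hgi
      have hiM : i = M := by omega
      apply hne
      rw [hiM]
      have : (-(M:ℤ)+(M:ℕ)) = 0 := by ring
      rw [this, hh_zero]
    · intro i hi
      simp only [Finset.mem_erase, Finset.mem_range] at hi ⊢
      omega
    · intro i hi
      simp only [Finset.mem_erase, Finset.mem_range] at hi
      omega
  rw [this]
  norm_num

lemma sum_gam {M : ℕ} (hM : 1 ≤ M) :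
    (∑ i ∈ Finset.range (2*M), gam (-(M:ℤ)+i))
      = 1 + (-2/(Real.pi*Complex.I)) * hh (-(M:ℤ)) := by
  simp only [gam_split]
  rw [Finset.sum_add_distrib, sum_ind hM, ← Finset.mul_sum, sum_hh hM]

lemma sum_del {M : ℕ} (hM : 1 ≤ M) :
    (∑ i ∈ Finset.range (2*M), del (-(M:ℤ)+i))
      = 1 + (2/(Real.pi*Complex.I)) * hh (-(M:ℤ)) := by
  simp only [del_split]
  rw [Finset.sum_add_distrib, sum_ind hM, ← Finset.mul_sum, sum_hh hM]


lemma prod_eq (n m : ℤ) : Efn n m * Efn (-m) n = gam n * del m := by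
  have hneg : ∀ k : ℤ, Odd (-k) ↔ Odd k := fun k => odd_neg
  rcases eq_or_ne n 0 with rfl | hn
  · rcases eq_or_ne m 0 with rfl | hm
    · simp [Efn_zero, gam, del]
    · rcases Int.even_or_odd m with he | ho
      · rw [Efn_zero, Efn_even (neg_ne_zero.mpr hm) (he.neg) 0]
        simp [gam, del, hm, Int.not_odd_iff_even.mpr he]
      · rw [Efn_zero, Efn_odd ((hneg m).mpr ho) 0]
        simp only [gam, del, if_pos rfl, hm, if_neg hm, if_pos ho]
        push_cast
        rw [zpow_zero]
        field_simp
  · rcases Int.even_or_odd n with he | ho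
    · rw [Efn_even hn he m]
      simp [gam, hn, Int.not_odd_iff_even.mpr he]
    · rcases eq_or_ne m 0 with rfl | hm
      · rw [neg_zero, Efn_zero, Efn_odd ho 0]
        simp [gam, del, hn, ho]
      · rcases Int.even_or_odd m with hme | hmo
        · rw [Efn_even (neg_ne_zero.mpr hm) hme.neg n]
          simp [del, hm, Int.not_odd_iff_even.mpr hme]
        · rw [Efn_odd ho m, Efn_odd ((hneg m).mpr hmo) n]
          simp only [gam, del, if_neg hn, if_neg hm, if_pos ho, if_pos hmo]
          have hpow : (-1:ℂ)^m * (-1:ℂ)^n = 1 := by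
            rw [← zpow_add₀ (by norm_num : (-1:ℂ) ≠ 0)]
            exact Even.neg_one_zpow (Odd.add_odd hmo ho)
          have hmc : (m:ℂ) ≠ 0 := Int.cast_ne_zero.mpr hm
          have hnc : (n:ℂ) ≠ 0 := Int.cast_ne_zero.mpr hn
          have hpi : (Real.pi:ℂ) ≠ 0 := by exact_mod_cast Real.pi_ne_zero
          have hI : Complex.I ≠ 0 := Complex.I_ne_zero
          push_cast
          set A := (-1:ℂ)^m with hA
          set B := (-1:ℂ)^n with hB
          field_simp
          linear_combination (-1:ℂ) * hpow

lemma bound_main (x : ℝ) (k : ℤ) (y : ℝ) :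
    ‖Complex.exp (Real.pi * Complex.I * ((⌊y⌋:ℂ) * x - (k:ℂ) * y))‖ ≤ 1 := by
  have h : ((⌊y⌋:ℂ) * x - (k:ℂ) * y) = (((⌊y⌋:ℝ) * x - (k:ℝ) * y : ℝ) : ℂ) := by push_cast; ring
  rw [h, norm_exp_eq_one]

lemma inner_eq (M : ℕ) (x : ℝ) :
    (∫ y in Set.Icc (-(M:ℝ)) (M:ℝ),
        Complex.exp (Real.pi * Complex.I * ((⌊y⌋ : ℂ) * x - (⌊x⌋ : ℂ) * y)))
    = ∑ i ∈ Finset.range (2*M),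
        Complex.exp (Real.pi * Complex.I * ((-(M:ℤ)+i : ℤ) : ℂ) * x) * Efn (-⌊x⌋) (-(M:ℤ)+i) := by
  rw [decomp M _ (fun a b => II (meas_main x ⌊x⌋) (bound_main x ⌊x⌋) a b)]
  refine Finset.sum_congr rfl fun i _ => ?_
  have hc : ((-(M:ℤ)+i : ℤ) : ℝ) = -(M:ℝ)+i := by push_cast; ring
  rw [← hc]
  exact piece ⌊x⌋ _ x

lemma II_term (ci lj : ℤ) (a b : ℝ) :
    IntervalIntegrable (fun x : ℝ =>
      Complex.exp (Real.pi*Complex.I*(ci:ℂ)*x) * Efn (-lj) ci) volume a b := by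
  apply II (C := 1)
  · exact meas_outer (fun _ => Efn (-lj) ci) _
  · intro y
    rw [norm_mul]
    have h : (Real.pi : ℂ) * Complex.I * (ci:ℂ) * y = Real.pi * Complex.I * ((ci : ℝ) * y : ℝ) := by
      push_cast; ring
    rw [h, norm_exp_eq_one, one_mul]
    exact Efn_norm_le _ _

lemma outer_piece {ι : Type*} (s : Finset ι) (c : ι → ℤ) (lj : ℤ) :
    (∫ x in (lj:ℝ)..((lj:ℝ)+1),
      ∑ i ∈ s, Complex.exp (Real.pi*Complex.I*(c i:ℂ)*x) * Efn (-⌊x⌋) (c i))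
    = ∑ i ∈ s, Efn (c i) lj * Efn (-lj) (c i) := by
  rw [integral_of_le (by linarith), integral_Ioc_eq_integral_Ioo]
  rw [setIntegral_congr_fun (g := fun x : ℝ =>
      ∑ i ∈ s, Complex.exp (Real.pi*Complex.I*(c i:ℂ)*x) * Efn (-lj) (c i))
    measurableSet_Ioo ?_]
  · rw [MeasureTheory.integral_finset_sum _ (fun i _ =>
      ((II_term (c i) lj (lj:ℝ) ((lj:ℝ)+1)).1).mono_set Set.Ioo_subset_Ioc_self)]
    refine Finset.sum_congr rfl fun i _ => ?_
    rw [MeasureTheory.integral_mul_const]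
    congr 1
    rw [← integral_Ioc_eq_integral_Ioo, ← integral_of_le (by linarith)]
    rfl
  · intro x hx
    have hfl : ⌊x⌋ = lj := Int.floor_eq_iff.mpr ⟨le_of_lt hx.1, by exact_mod_cast hx.2⟩
    simp only [hfl]

lemma g_integrable (M : ℕ) (a b : ℝ) :
    IntervalIntegrable (fun x : ℝ => ∑ i ∈ Finset.range (2*M),
      Complex.exp (Real.pi * Complex.I * ((-(M:ℤ)+i : ℤ) : ℂ) * x) * Efn (-⌊x⌋) (-(M:ℤ)+i))
      volume a b := by
  apply II (C := (2*M : ℝ))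
  · apply Finset.measurable_sum
    intro i _
    exact meas_outer (fun k => Efn (-k) (-(M:ℤ)+i)) _
  · intro x
    calc ‖∑ i ∈ Finset.range (2*M),
        Complex.exp (Real.pi * Complex.I * ((-(M:ℤ)+i : ℤ) : ℂ) * x) * Efn (-⌊x⌋) (-(M:ℤ)+i)‖
        ≤ ∑ i ∈ Finset.range (2*M),
          ‖Complex.exp (Real.pi * Complex.I * ((-(M:ℤ)+i : ℤ) : ℂ) * x) * Efn (-⌊x⌋) (-(M:ℤ)+i)‖ :=
          norm_sum_le _ _
      _ ≤ ∑ i ∈ Finset.range (2*M), 1 := by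
          refine Finset.sum_le_sum fun i _ => ?_
          rw [norm_mul]
          have h : (Real.pi : ℂ) * Complex.I * ((-(M:ℤ)+i : ℤ):ℂ) * x
              = Real.pi * Complex.I * (((-(M:ℤ)+i : ℤ) : ℝ) * x : ℝ) := by push_cast; ring
          rw [h, norm_exp_eq_one, one_mul]
          exact Efn_norm_le _ _
      _ = (2*M : ℝ) := by simp

lemma key_formula {M : ℕ} (hM : 1 ≤ M) :
    (∫ x in Set.Icc (-(M:ℝ)) (M:ℝ), ∫ y in Set.Icc (-(M:ℝ)) (M:ℝ),
        Complex.exp (Real.pi * Complex.I * ((⌊y⌋ : ℂ) * x - (⌊x⌋ : ℂ) * y)))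
    = (1 + (-2/(Real.pi*Complex.I)) * hh (-(M:ℤ))) * (1 + (2/(Real.pi*Complex.I)) * hh (-(M:ℤ))) := by
  have hfun : (fun x : ℝ => ∫ y in Set.Icc (-(M:ℝ)) (M:ℝ),
        Complex.exp (Real.pi * Complex.I * ((⌊y⌋ : ℂ) * x - (⌊x⌋ : ℂ) * y)))
      = fun x : ℝ => ∑ i ∈ Finset.range (2*M),
        Complex.exp (Real.pi * Complex.I * ((-(M:ℤ)+i : ℤ) : ℂ) * x) * Efn (-⌊x⌋) (-(M:ℤ)+i) :=
    funext (inner_eq M)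
  rw [hfun, decomp M _ (g_integrable M)]
  have step : ∀ j ∈ Finset.range (2*M),
      (∫ x in (-(M:ℝ)+j)..(-(M:ℝ)+j+1), ∑ i ∈ Finset.range (2*M),
        Complex.exp (Real.pi * Complex.I * ((-(M:ℤ)+i : ℤ) : ℂ) * x) * Efn (-⌊x⌋) (-(M:ℤ)+i))
      = ∑ i ∈ Finset.range (2*M), gam (-(M:ℤ)+i) * del (-(M:ℤ)+j) := by
    intro j _
    have hc : ((-(M:ℤ)+j : ℤ) : ℝ) = -(M:ℝ)+j := by push_cast; ring
    rw [← hc, outer_piece (Finset.range (2*M)) (fun i => -(M:ℤ)+i) (-(M:ℤ)+j)]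
    exact Finset.sum_congr rfl fun i _ => prod_eq _ _
  rw [Finset.sum_congr rfl step]
  have : ∀ j ∈ Finset.range (2*M),
      (∑ i ∈ Finset.range (2*M), gam (-(M:ℤ)+i) * del (-(M:ℤ)+j))
      = (∑ i ∈ Finset.range (2*M), gam (-(M:ℤ)+i)) * del (-(M:ℤ)+j) := fun j _ =>
    (Finset.sum_mul _ _ _).symm
  rw [Finset.sum_congr rfl this, ← Finset.mul_sum, sum_gam hM, sum_del hM]

theorem improper_integral_floor_phase :
    Filter.Tendsto
      (fun M : ℕ => ∫ x in Set.Icc (-(M:ℝ)) (M:ℝ), ∫ y in Set.Icc (-(M:ℝ)) (M:ℝ),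
        Complex.exp (Real.pi * Complex.I * ((⌊y⌋ : ℂ) * x - (⌊x⌋ : ℂ) * y)))
      Filter.atTop (nhds 1) := by
  have hs : Filter.Tendsto (fun M : ℕ => hh (-(M:ℤ))) Filter.atTop (nhds 0) := by
    apply squeeze_zero_norm (a := fun M : ℕ => 1/(M:ℝ)) ?_ tendsto_one_div_atTop_nhds_zero_nat
    intro M
    by_cases ho : Odd (-(M:ℤ))
    · have hcast : ((-(M:ℤ) : ℤ) : ℂ) = -(M:ℂ) := by push_cast; ring
      rw [hh, if_pos ho, hcast, norm_inv, norm_neg]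
      simp [one_div]
    · rw [hh, if_neg ho, norm_zero]
      simp only [one_div]
      positivity
  have hlim : Filter.Tendsto (fun M : ℕ =>
      (1 + (-2/(Real.pi*Complex.I)) * hh (-(M:ℤ))) * (1 + (2/(Real.pi*Complex.I)) * hh (-(M:ℤ))))
      Filter.atTop (nhds 1) := by
    have h1 : Filter.Tendsto (fun M : ℕ => 1 + (-2/(Real.pi*Complex.I)) * hh (-(M:ℤ)))
        Filter.atTop (nhds (1 + (-2/((Real.pi:ℂ)*Complex.I)) * 0)) :=
      tendsto_const_nhds.add (tendsto_const_nhds.mul hs)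
    have h2 : Filter.Tendsto (fun M : ℕ => 1 + (2/(Real.pi*Complex.I)) * hh (-(M:ℤ)))
        Filter.atTop (nhds (1 + (2/((Real.pi:ℂ)*Complex.I)) * 0)) :=
      tendsto_const_nhds.add (tendsto_const_nhds.mul hs)
    simpa using h1.mul h2
  refine Filter.Tendsto.congr' ?_ hlim
  filter_upwards [Filter.eventually_ge_atTop 1] with M hM
  exact (key_formula hM).symm
end

section
/- The system of twisted translates {T^t_{(k,l)} φ₂ : k, l ∈ ℤ} is a Riesz sequence in L²(ℝ²), i.e., there exist constants A, B > 0 such that A‖c‖² ≤ ‖Σ c_{k,l} T^t_{(k,l)} φ₂‖² ≤ B‖c‖² for all finite sequences c ∈ ℓ²(ℤ²). -/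
open MeasureTheory

noncomputable def tT (k l : ℤ) (φ : ℝ × ℝ → ℂ) : ℝ × ℝ → ℂ :=
  fun p => Complex.exp (Real.pi * Complex.I * ((l : ℂ) * p.1 - (k : ℂ) * p.2)) *
    φ (p.1 - k, p.2 - l)

namespace RieszAux

noncomputable def f0 (t : ℝ) : ℂ := if t ∈ Set.Ico (0:ℝ) 1 then 1 else 0

noncomputable def AA (x y : ℝ) : ℂ :=
  ∫ u : ℝ, f0 (x - u) * f0 u * Complex.exp ((Real.pi * u * y : ℝ) * Complex.I)

noncomputable def BB (x y : ℝ) : ℂ :=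
  ∫ v : ℝ, f0 (y - v) * f0 v * Complex.exp ((-(Real.pi * v * x) : ℝ) * Complex.I)

lemma phi1_eq (a b : ℝ) : phi1 (a, b) = f0 a * f0 b := by
  simp only [phi1, f0]
  by_cases h1 : a ∈ Set.Ico (0:ℝ) 1 <;> by_cases h2 : b ∈ Set.Ico (0:ℝ) 1 <;>
    simp [h1, h2]

lemma f0_one {t : ℝ} (h : 0 ≤ t ∧ t < 1) : f0 t = 1 := by
  simp [f0, Set.mem_Ico, h.1, h.2]

lemma f0_zero {t : ℝ} (h : ¬ (0 ≤ t ∧ t < 1)) : f0 t = 0 := by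
  simp only [f0, Set.mem_Ico]
  exact if_neg h

lemma phiN_two : phiN 2 = tConv phi1 phi1 := rfl

lemma phi2_eq (p : ℝ × ℝ) : tConv phi1 phi1 p = AA p.1 p.2 * BB p.1 p.2 := by
  have key : ∀ q : ℝ × ℝ,
      phi1 (p.1 - q.1, p.2 - q.2) * phi1 q *
        Complex.exp (Real.pi * Complex.I * ((q.1 : ℂ) * p.2 - (q.2 : ℂ) * p.1)) =
      (f0 (p.1 - q.1) * f0 q.1 * Complex.exp ((Real.pi * q.1 * p.2 : ℝ) * Complex.I)) *
      (f0 (p.2 - q.2) * f0 q.2 * Complex.exp ((-(Real.pi * q.2 * p.1) : ℝ) * Complex.I)) := by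
    intro q
    have hq : (q : ℝ × ℝ) = (q.1, q.2) := rfl
    rw [phi1_eq, hq, phi1_eq]
    rw [show Complex.exp (Real.pi * Complex.I * ((q.1 : ℂ) * p.2 - (q.2 : ℂ) * p.1)) =
        Complex.exp ((Real.pi * q.1 * p.2 : ℝ) * Complex.I) *
        Complex.exp ((-(Real.pi * q.2 * p.1) : ℝ) * Complex.I) by
      rw [← Complex.exp_add]; congr 1; push_cast; ring]
    ring
  unfold tConv
  rw [show (∫ q : ℝ × ℝ, phi1 (p.1 - q.1, p.2 - q.2) * phi1 q *
      Complex.exp (Real.pi * Complex.I * ((q.1 : ℂ) * p.2 - (q.2 : ℂ) * p.1))) =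
      ∫ q : ℝ × ℝ,
      (f0 (p.1 - q.1) * f0 q.1 * Complex.exp ((Real.pi * q.1 * p.2 : ℝ) * Complex.I)) *
      (f0 (p.2 - q.2) * f0 q.2 * Complex.exp ((-(Real.pi * q.2 * p.1) : ℝ) * Complex.I)) from
    congrArg _ (funext key)]
  rw [MeasureTheory.Measure.volume_eq_prod]
  exact MeasureTheory.integral_prod_mul (μ := volume) (ν := volume)
    (f := fun u => f0 (p.1 - u) * f0 u * Complex.exp ((Real.pi * u * p.2 : ℝ) * Complex.I))
    (g := fun v => f0 (p.2 - v) * f0 v * Complex.exp ((-(Real.pi * v * p.1) : ℝ) * Complex.I))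


def Sx (x : ℝ) : Set ℝ := Set.Ico (0:ℝ) 1 ∩ Set.Ioc (x-1) x

lemma Sx_meas (x : ℝ) : MeasurableSet (Sx x) :=
  measurableSet_Ico.inter measurableSet_Ioc

lemma Sx_vol (x : ℝ) : volume (Sx x) ≤ 1 := by
  calc volume (Sx x) ≤ volume (Set.Ico (0:ℝ) 1) :=
        measure_mono Set.inter_subset_left
    _ = 1 := by simp

lemma AA_eq (x y : ℝ) :
    AA x y = ∫ u in Sx x, Complex.exp ((Real.pi * u * y : ℝ) * Complex.I) := by
  unfold AA
  rw [← MeasureTheory.integral_indicator (Sx_meas x)]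
  congr 1
  funext u
  by_cases h1 : (0:ℝ) ≤ u ∧ u < 1
  · by_cases h2 : x - 1 < u ∧ u ≤ x
    · have hm : u ∈ Sx x := ⟨by simpa [Set.mem_Ico] using h1, by simpa [Set.mem_Ioc] using h2⟩
      rw [Set.indicator_of_mem hm, f0_one h1, f0_one ⟨by linarith [h2.2], by linarith [h2.1]⟩]
      ring
    · have hm : u ∉ Sx x := by
        intro hc
        exact h2 ⟨hc.2.1, hc.2.2⟩
      rw [Set.indicator_of_notMem hm, f0_zero (t := x - u) (by
        intro hc
        exact h2 ⟨by linarith [hc.2], by linarith [hc.1]⟩)]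
      ring
  · have hm : u ∉ Sx x := by
      intro hc
      exact h1 ⟨hc.1.1, hc.1.2⟩
    rw [Set.indicator_of_notMem hm, f0_zero h1]
    ring

lemma BB_eq (x y : ℝ) :
    BB x y = ∫ v in Sx y, Complex.exp ((-(Real.pi * v * x) : ℝ) * Complex.I) := by
  unfold BB
  rw [← MeasureTheory.integral_indicator (Sx_meas y)]
  congr 1
  funext v
  by_cases h1 : (0:ℝ) ≤ v ∧ v < 1
  · by_cases h2 : y - 1 < v ∧ v ≤ y
    · have hm : v ∈ Sx y := ⟨by simpa [Set.mem_Ico] using h1, by simpa [Set.mem_Ioc] using h2⟩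
      rw [Set.indicator_of_mem hm, f0_one h1, f0_one ⟨by linarith [h2.2], by linarith [h2.1]⟩]
      ring
    · have hm : v ∉ Sx y := by
        intro hc
        exact h2 ⟨hc.2.1, hc.2.2⟩
      rw [Set.indicator_of_notMem hm, f0_zero (t := y - v) (by
        intro hc
        exact h2 ⟨by linarith [hc.2], by linarith [hc.1]⟩)]
      ring
  · have hm : v ∉ Sx y := by
      intro hc
      exact h1 ⟨hc.1.1, hc.1.2⟩
    rw [Set.indicator_of_notMem hm, f0_zero h1]
    ring

/-- generic bound for set integrals of unimodular functions -/
lemma norm_setInt_le {S : Set ℝ} {g : ℝ → ℂ} (hS : MeasurableSet S)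
    (hg : ∀ u ∈ S, ‖g u‖ ≤ 1)
    {C : ℝ} (hC0 : 0 ≤ C) (hC : volume S ≤ ENNReal.ofReal C) :
    ‖∫ u in S, g u‖ ≤ C := by
  have hSfin : volume S < ⊤ := lt_of_le_of_lt hC (by simp)
  have h1 : ‖∫ u in S, g u‖ ≤ 1 * (volume S).toReal :=
    MeasureTheory.norm_setIntegral_le_of_norm_le_const hSfin (fun x hx => hg x hx)
  have h2 : (volume S).toReal ≤ C := by
    rw [← ENNReal.toReal_ofReal hC0]
    exact ENNReal.toReal_mono (by simp) hC
  linarith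

lemma norm_exp_unimodular (r : ℝ) : ‖Complex.exp ((r:ℂ) * Complex.I)‖ = 1 :=
  Complex.norm_exp_ofReal_mul_I r

lemma AA_le_one (x y : ℝ) : ‖AA x y‖ ≤ 1 := by
  rw [AA_eq]
  exact norm_setInt_le (Sx_meas x) (fun u _ => le_of_eq (norm_exp_unimodular _)) zero_le_one
    (by simpa using Sx_vol x)

lemma BB_le_one (x y : ℝ) : ‖BB x y‖ ≤ 1 := by
  rw [BB_eq]
  exact norm_setInt_le (Sx_meas y) (fun u _ => le_of_eq (norm_exp_unimodular _)) zero_le_one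
    (by simpa using Sx_vol y)

lemma Sx_subset_low {x : ℝ} : Sx x ⊆ Set.Icc 0 x := fun u hu =>
  ⟨hu.1.1, hu.2.2⟩

lemma Sx_subset_high {x : ℝ} : Sx x ⊆ Set.Icc (x-1) 1 := fun u hu =>
  ⟨le_of_lt hu.2.1, le_of_lt hu.1.2⟩

lemma Sx_vol_low {x : ℝ} (hx : x ≤ 1/100) : volume (Sx x) ≤ ENNReal.ofReal (1/100) := by
  calc volume (Sx x) ≤ volume (Set.Icc 0 x) := measure_mono Sx_subset_low
    _ = ENNReal.ofReal (x - 0) := Real.volume_Icc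
    _ ≤ ENNReal.ofReal (1/100) := ENNReal.ofReal_le_ofReal (by linarith)

lemma Sx_vol_high {x : ℝ} (hx : 2 - 1/100 ≤ x) : volume (Sx x) ≤ ENNReal.ofReal (1/100) := by
  calc volume (Sx x) ≤ volume (Set.Icc (x-1) 1) := measure_mono Sx_subset_high
    _ = ENNReal.ofReal (1 - (x-1)) := Real.volume_Icc
    _ ≤ ENNReal.ofReal (1/100) := ENNReal.ofReal_le_ofReal (by linarith)

lemma AA_small {x y : ℝ} (hx : x ≤ 1/100 ∨ 2 - 1/100 ≤ x) : ‖AA x y‖ ≤ 1/100 := by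
  rw [AA_eq]
  refine norm_setInt_le (Sx_meas x) (fun u _ => le_of_eq (norm_exp_unimodular _)) (by norm_num) ?_
  rcases hx with hx | hx
  exacts [Sx_vol_low hx, Sx_vol_high hx]

lemma BB_small {x y : ℝ} (hy : y ≤ 1/100 ∨ 2 - 1/100 ≤ y) : ‖BB x y‖ ≤ 1/100 := by
  rw [BB_eq]
  refine norm_setInt_le (Sx_meas y) (fun u _ => le_of_eq (norm_exp_unimodular _)) (by norm_num) ?_
  rcases hy with hy | hy
  exacts [Sx_vol_low hy, Sx_vol_high hy]

lemma Sx_empty {x : ℝ} (hx : x < 0 ∨ 2 ≤ x) : Sx x = ∅ := by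
  ext u
  simp only [Sx, Set.mem_inter_iff, Set.mem_Ico, Set.mem_Ioc, Set.mem_empty_iff_false,
    iff_false]
  rintro ⟨⟨ha, hb⟩, hc, hd⟩
  rcases hx with hx | hx
  · linarith
  · linarith

lemma AA_zero {x y : ℝ} (hx : x < 0 ∨ 2 ≤ x) : AA x y = 0 := by
  rw [AA_eq, Sx_empty hx]
  simp

lemma BB_zero {x y : ℝ} (hy : y < 0 ∨ 2 ≤ y) : BB x y = 0 := by
  rw [BB_eq, Sx_empty hy]
  simp

lemma phi2_zero {w : ℝ × ℝ} (hw : w.1 < 0 ∨ 2 ≤ w.1 ∨ w.2 < 0 ∨ 2 ≤ w.2) :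
    tConv phi1 phi1 w = 0 := by
  rw [phi2_eq]
  rcases hw with h | h | h | h
  · rw [AA_zero (Or.inl h), zero_mul]
  · rw [AA_zero (Or.inr h), zero_mul]
  · rw [BB_zero (Or.inl h), mul_zero]
  · rw [BB_zero (Or.inr h), mul_zero]

lemma phi2_le_one (w : ℝ × ℝ) : ‖tConv phi1 phi1 w‖ ≤ 1 := by
  rw [phi2_eq, norm_mul]
  exact mul_le_one₀ (AA_le_one _ _) (norm_nonneg _) (BB_le_one _ _)

lemma phi2_small {w : ℝ × ℝ}
    (hw : w.1 ≤ 1/100 ∨ 2 - 1/100 ≤ w.1 ∨ w.2 ≤ 1/100 ∨ 2 - 1/100 ≤ w.2) :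
    ‖tConv phi1 phi1 w‖ ≤ 1/100 := by
  rw [phi2_eq, norm_mul]
  rcases hw with h | h | h | h
  · calc ‖AA w.1 w.2‖ * ‖BB w.1 w.2‖ ≤ (1/100) * 1 :=
        mul_le_mul (AA_small (Or.inl h)) (BB_le_one _ _) (norm_nonneg _) (by norm_num)
      _ = 1/100 := by ring
  · calc ‖AA w.1 w.2‖ * ‖BB w.1 w.2‖ ≤ (1/100) * 1 :=
        mul_le_mul (AA_small (Or.inr h)) (BB_le_one _ _) (norm_nonneg _) (by norm_num)
      _ = 1/100 := by ring
  · calc ‖AA w.1 w.2‖ * ‖BB w.1 w.2‖ ≤ 1 * (1/100) :=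
        mul_le_mul (AA_le_one _ _) (BB_small (Or.inl h)) (norm_nonneg _) (by norm_num)
      _ = 1/100 := by ring
  · calc ‖AA w.1 w.2‖ * ‖BB w.1 w.2‖ ≤ 1 * (1/100) :=
        mul_le_mul (AA_le_one _ _) (BB_small (Or.inr h)) (norm_nonneg _) (by norm_num)
      _ = 1/100 := by ring


lemma cont_unimod_exp (a b : ℝ) : Continuous (fun u : ℝ => Complex.exp ((a * u * b : ℝ) * Complex.I)) := by
  fun_prop

lemma integrableOn_unimod {S : Set ℝ} (hfin : volume S < ⊤) {g : ℝ → ℂ}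
    (hg : Continuous g) (hb : ∀ u, ‖g u‖ ≤ 1) : IntegrableOn g S := by
  refine MeasureTheory.Integrable.mono' (g := fun _ => (1:ℝ))
    (MeasureTheory.integrableOn_const hfin.ne)
    hg.aestronglyMeasurable.restrict ?_
  exact Filter.Eventually.of_forall hb

lemma exp_diff {a b : ℝ} (h : |a - b| ≤ 1) :
    ‖Complex.exp ((a:ℝ) * Complex.I) - Complex.exp ((b:ℝ) * Complex.I)‖ ≤ 2 * |a - b| := by
  have key : Complex.exp ((a:ℝ) * Complex.I) - Complex.exp ((b:ℝ) * Complex.I) =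
      Complex.exp ((b:ℝ) * Complex.I) * (Complex.exp (((a - b : ℝ) : ℂ) * Complex.I) - 1) := by
    rw [mul_sub, mul_one, ← Complex.exp_add]
    congr 1
    push_cast
    ring
  rw [key, norm_mul, norm_exp_unimodular b, one_mul]
  have habs : ‖((a - b : ℝ) : ℂ) * Complex.I‖ = |a - b| := by
    rw [norm_mul, Complex.norm_I, mul_one, Complex.norm_real, Real.norm_eq_abs]
  calc ‖Complex.exp (((a - b : ℝ) : ℂ) * Complex.I) - 1‖
      = ‖Complex.exp (((a - b : ℝ) : ℂ) * Complex.I) - 1‖ := rfl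
    _ ≤ 2 * ‖((a - b : ℝ) : ℂ) * Complex.I‖ :=
        Complex.norm_exp_sub_one_le (by rw [habs]; exact h)
    _ = 2 * |a - b| := by rw [habs]

lemma Cone_val : ‖∫ u in Set.Ico (0:ℝ) 1, Complex.exp ((Real.pi * u * 1 : ℝ) * Complex.I)‖
    = 2 / Real.pi := by
  have h1 : (∫ u in Set.Ico (0:ℝ) 1, Complex.exp ((Real.pi * u * 1 : ℝ) * Complex.I))
      = ∫ u in (0:ℝ)..1, Complex.exp ((Real.pi : ℂ) * Complex.I * u) := by
    rw [intervalIntegral.integral_of_le zero_le_one,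
        MeasureTheory.integral_Ico_eq_integral_Ioo, MeasureTheory.integral_Ioc_eq_integral_Ioo]
    congr 1
    funext u
    congr 1
    push_cast
    ring
  have hc : (Real.pi : ℂ) * Complex.I ≠ 0 :=
    mul_ne_zero (by exact_mod_cast Real.pi_ne_zero) Complex.I_ne_zero
  rw [h1, integral_exp_mul_complex hc]
  simp only [Complex.ofReal_one, Complex.ofReal_zero, mul_one, mul_zero]
  rw [Complex.exp_zero, Complex.exp_pi_mul_I]
  rw [show (-1 - 1 : ℂ) = (-2 : ℂ) by norm_num]
  rw [norm_div]
  simp [map_mul, Complex.norm_real, abs_of_pos Real.pi_pos]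

lemma Cone_val' : ‖∫ u in Set.Ico (0:ℝ) 1, Complex.exp ((-(Real.pi * u * 1) : ℝ) * Complex.I)‖
    = 2 / Real.pi := by
  have h1 : (∫ u in Set.Ico (0:ℝ) 1, Complex.exp ((-(Real.pi * u * 1) : ℝ) * Complex.I))
      = ∫ u in (0:ℝ)..1, Complex.exp ((-(Real.pi : ℂ) * Complex.I) * u) := by
    rw [intervalIntegral.integral_of_le zero_le_one,
        MeasureTheory.integral_Ico_eq_integral_Ioo, MeasureTheory.integral_Ioc_eq_integral_Ioo]
    congr 1
    funext u
    congr 1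
    push_cast
    ring
  have hc : -(Real.pi : ℂ) * Complex.I ≠ 0 :=
    mul_ne_zero (by simpa using (by exact_mod_cast Real.pi_ne_zero : (Real.pi:ℂ) ≠ 0))
      Complex.I_ne_zero
  rw [h1, integral_exp_mul_complex hc]
  simp only [Complex.ofReal_one, Complex.ofReal_zero, mul_one, mul_zero]
  have hexp : Complex.exp (-(Real.pi : ℂ) * Complex.I) = -1 := by
    rw [show -(Real.pi : ℂ) * Complex.I = -((Real.pi : ℂ) * Complex.I) by ring,
      Complex.exp_neg, Complex.exp_pi_mul_I]
    norm_num
  rw [hexp, Complex.exp_zero]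
  rw [show (-1 - 1 : ℂ) = (-2 : ℂ) by norm_num]
  rw [norm_div]
  simp [map_mul, Complex.norm_real, abs_of_pos Real.pi_pos]


lemma AA_center {x y : ℝ} (hx : |x - 1| ≤ 1/100) (hy : |y - 1| ≤ 1/100) :
    (0.56:ℝ) ≤ ‖AA x y‖ := by
  set g : ℝ → ℂ := fun u => Complex.exp ((Real.pi * u * y : ℝ) * Complex.I) with hg_def
  have hgc : Continuous g := by fun_prop
  have hg1 : ∀ u, ‖g u‖ = 1 := fun u => norm_exp_unimodular _
  set g1 : ℝ → ℂ := fun u => Complex.exp ((Real.pi * u * 1 : ℝ) * Complex.I) with hg1_def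
  have hg1c : Continuous g1 := by fun_prop
  set U : Set ℝ := Set.Ico (0:ℝ) 1 \ Set.Ioc (x-1) x with hU_def
  have hUmeas : MeasurableSet U := measurableSet_Ico.diff measurableSet_Ioc
  have hUfin : volume U < ⊤ := by
    refine lt_of_le_of_lt (measure_mono Set.diff_subset) ?_
    simp [Real.volume_Ico]
  have hIcofin : volume (Set.Ico (0:ℝ) 1) < ⊤ := by simp [Real.volume_Ico]
  have hSfin : volume (Sx x) < ⊤ := lt_of_le_of_lt (Sx_vol x) (by simp)
  have hdisj : Disjoint (Sx x) U :=
    Disjoint.mono_left Set.inter_subset_right Set.disjoint_sdiff_right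
  have hunion : Sx x ∪ U = Set.Ico (0:ℝ) 1 := Set.inter_union_diff _ _
  have hintS : IntegrableOn g (Sx x) := integrableOn_unimod hSfin hgc (fun u => le_of_eq (hg1 u))
  have hintU : IntegrableOn g U := integrableOn_unimod hUfin hgc (fun u => le_of_eq (hg1 u))
  have hintIco : IntegrableOn g (Set.Ico (0:ℝ) 1) :=
    integrableOn_unimod hIcofin hgc (fun u => le_of_eq (hg1 u))
  have hintIco1 : IntegrableOn g1 (Set.Ico (0:ℝ) 1) :=
    integrableOn_unimod hIcofin hg1c (fun u => le_of_eq (norm_exp_unimodular _))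
  have hsplit : (∫ u in Set.Ico (0:ℝ) 1, g u) = (∫ u in Sx x, g u) + ∫ u in U, g u := by
    rw [← MeasureTheory.setIntegral_union hdisj hUmeas hintS hintU, hunion]
  -- bound on U piece
  have hUvol : volume U ≤ ENNReal.ofReal (1/100) := by
    have hsub : U ⊆ Set.Icc 0 (x-1) ∪ Set.Ioo x 1 := by
      intro u hu
      rcases hu with ⟨⟨hu0, hu1⟩, hu2⟩
      rw [Set.mem_Ioc, not_and_or] at hu2
      rcases hu2 with hu2 | hu2
      · exact Or.inl ⟨hu0, by linarith [not_lt.mp hu2]⟩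
      · exact Or.inr ⟨by linarith [not_le.mp hu2], hu1⟩
    refine le_trans (measure_mono hsub) (le_trans (measure_union_le _ _) ?_)
    rw [Real.volume_Icc, Real.volume_Ioo]
    rcases abs_le.mp hx with ⟨hx1, hx2⟩
    rcases le_or_gt x 1 with hc | hc
    · rw [ENNReal.ofReal_of_nonpos (by linarith)]
      rw [zero_add]
      exact ENNReal.ofReal_le_ofReal (by linarith)
    · rw [show ENNReal.ofReal (1 - x) = 0 from ENNReal.ofReal_of_nonpos (by linarith)]
      rw [add_zero]
      exact ENNReal.ofReal_le_ofReal (by linarith)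
  have hU_bound : ‖∫ u in U, g u‖ ≤ 1/100 :=
    norm_setInt_le hUmeas (fun u _ => le_of_eq (hg1 u)) (by norm_num) hUvol
  -- compare with y = 1 integral
  have hdiff : ‖(∫ u in Set.Ico (0:ℝ) 1, g u) - ∫ u in Set.Ico (0:ℝ) 1, g1 u‖
      ≤ Real.pi / 50 := by
    rw [← MeasureTheory.integral_sub hintIco hintIco1]
    have hb : ∀ u ∈ Set.Ico (0:ℝ) 1, ‖g u - g1 u‖ ≤ Real.pi / 50 := by
      intro u hu
      rcases hu with ⟨hu0, hu1⟩
      have habs : |Real.pi * u * y - Real.pi * u * 1| ≤ Real.pi / 100 := by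
        rw [show Real.pi * u * y - Real.pi * u * 1 = (Real.pi * u) * (y - 1) by ring, abs_mul]
        rw [abs_of_nonneg (by positivity)]
        calc Real.pi * u * |y - 1| ≤ Real.pi * 1 * (1/100) := by
              apply mul_le_mul _ hy (abs_nonneg _) (by positivity)
              nlinarith [Real.pi_pos]
          _ = Real.pi / 100 := by ring
      calc ‖g u - g1 u‖ ≤ 2 * |Real.pi * u * y - Real.pi * u * 1| :=
            exp_diff (le_trans habs (by nlinarith [Real.pi_lt_d2]))
        _ ≤ 2 * (Real.pi / 100) := by linarith
        _ = Real.pi / 50 := by ring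
    calc ‖∫ u in Set.Ico (0:ℝ) 1, (g u - g1 u)‖
        ≤ (Real.pi / 50) * (volume (Set.Ico (0:ℝ) 1)).toReal :=
          MeasureTheory.norm_setIntegral_le_of_norm_le_const hIcofin hb
      _ = Real.pi / 50 := by simp [Real.volume_Ico]
  have hCone : ‖∫ u in Set.Ico (0:ℝ) 1, g1 u‖ = 2 / Real.pi := Cone_val
  -- assemble
  have h1 : ‖∫ u in Set.Ico (0:ℝ) 1, g u‖ ≥ 2 / Real.pi - Real.pi / 50 := by
    have := norm_sub_norm_le (∫ u in Set.Ico (0:ℝ) 1, g1 u) (∫ u in Set.Ico (0:ℝ) 1, g u)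
    rw [hCone, norm_sub_rev] at this
    linarith [hdiff]
  have h2 : ‖AA x y‖ ≥ ‖∫ u in Set.Ico (0:ℝ) 1, g u‖ - 1/100 := by
    rw [AA_eq]
    have heq : (∫ u in Sx x, g u) = (∫ u in Set.Ico (0:ℝ) 1, g u) - ∫ u in U, g u := by
      rw [hsplit]; ring
    calc ‖∫ u in Sx x, g u‖ = ‖(∫ u in Set.Ico (0:ℝ) 1, g u) - ∫ u in U, g u‖ := by rw [heq]
      _ ≥ ‖∫ u in Set.Ico (0:ℝ) 1, g u‖ - ‖∫ u in U, g u‖ := norm_sub_norm_le _ _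
      _ ≥ ‖∫ u in Set.Ico (0:ℝ) 1, g u‖ - 1/100 := by linarith [hU_bound]
  have hpi1 : (2:ℝ)/3.15 ≤ 2/Real.pi := by
    apply div_le_div_of_nonneg_left (by norm_num) Real.pi_pos (le_of_lt Real.pi_lt_d2)
  have hpi2 : Real.pi / 50 ≤ 3.15/50 := by linarith [Real.pi_lt_d2]
  have : (0.56:ℝ) ≤ 2/Real.pi - Real.pi/50 - 1/100 := by linarith [hpi1, hpi2]
  linarith

lemma BB_center {x y : ℝ} (hx : |x - 1| ≤ 1/100) (hy : |y - 1| ≤ 1/100) :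
    (0.56:ℝ) ≤ ‖BB x y‖ := by
  set g : ℝ → ℂ := fun v => Complex.exp ((-(Real.pi * v * x) : ℝ) * Complex.I) with hg_def
  have hgc : Continuous g := by fun_prop
  have hg1 : ∀ u, ‖g u‖ = 1 := fun u => norm_exp_unimodular _
  set g1 : ℝ → ℂ := fun v => Complex.exp ((-(Real.pi * v * 1) : ℝ) * Complex.I) with hg1_def
  have hg1c : Continuous g1 := by fun_prop
  set U : Set ℝ := Set.Ico (0:ℝ) 1 \ Set.Ioc (y-1) y with hU_def
  have hUmeas : MeasurableSet U := measurableSet_Ico.diff measurableSet_Ioc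
  have hUfin : volume U < ⊤ := by
    refine lt_of_le_of_lt (measure_mono Set.diff_subset) ?_
    simp [Real.volume_Ico]
  have hIcofin : volume (Set.Ico (0:ℝ) 1) < ⊤ := by simp [Real.volume_Ico]
  have hSfin : volume (Sx y) < ⊤ := lt_of_le_of_lt (Sx_vol y) (by simp)
  have hdisj : Disjoint (Sx y) U :=
    Disjoint.mono_left Set.inter_subset_right Set.disjoint_sdiff_right
  have hunion : Sx y ∪ U = Set.Ico (0:ℝ) 1 := Set.inter_union_diff _ _
  have hintS : IntegrableOn g (Sx y) := integrableOn_unimod hSfin hgc (fun u => le_of_eq (hg1 u))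
  have hintU : IntegrableOn g U := integrableOn_unimod hUfin hgc (fun u => le_of_eq (hg1 u))
  have hintIco : IntegrableOn g (Set.Ico (0:ℝ) 1) :=
    integrableOn_unimod hIcofin hgc (fun u => le_of_eq (hg1 u))
  have hintIco1 : IntegrableOn g1 (Set.Ico (0:ℝ) 1) :=
    integrableOn_unimod hIcofin hg1c (fun u => le_of_eq (norm_exp_unimodular _))
  have hsplit : (∫ u in Set.Ico (0:ℝ) 1, g u) = (∫ u in Sx y, g u) + ∫ u in U, g u := by
    rw [← MeasureTheory.setIntegral_union hdisj hUmeas hintS hintU, hunion]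
  have hUvol : volume U ≤ ENNReal.ofReal (1/100) := by
    have hsub : U ⊆ Set.Icc 0 (y-1) ∪ Set.Ioo y 1 := by
      intro u hu
      rcases hu with ⟨⟨hu0, hu1⟩, hu2⟩
      rw [Set.mem_Ioc, not_and_or] at hu2
      rcases hu2 with hu2 | hu2
      · exact Or.inl ⟨hu0, by linarith [not_lt.mp hu2]⟩
      · exact Or.inr ⟨by linarith [not_le.mp hu2], hu1⟩
    refine le_trans (measure_mono hsub) (le_trans (measure_union_le _ _) ?_)
    rw [Real.volume_Icc, Real.volume_Ioo]
    rcases abs_le.mp hy with ⟨hy1, hy2⟩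
    rcases le_or_gt y 1 with hc | hc
    · rw [ENNReal.ofReal_of_nonpos (by linarith)]
      rw [zero_add]
      exact ENNReal.ofReal_le_ofReal (by linarith)
    · rw [show ENNReal.ofReal (1 - y) = 0 from ENNReal.ofReal_of_nonpos (by linarith)]
      rw [add_zero]
      exact ENNReal.ofReal_le_ofReal (by linarith)
  have hU_bound : ‖∫ u in U, g u‖ ≤ 1/100 :=
    norm_setInt_le hUmeas (fun u _ => le_of_eq (hg1 u)) (by norm_num) hUvol
  have hdiff : ‖(∫ u in Set.Ico (0:ℝ) 1, g u) - ∫ u in Set.Ico (0:ℝ) 1, g1 u‖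
      ≤ Real.pi / 50 := by
    rw [← MeasureTheory.integral_sub hintIco hintIco1]
    have hb : ∀ u ∈ Set.Ico (0:ℝ) 1, ‖g u - g1 u‖ ≤ Real.pi / 50 := by
      intro u hu
      rcases hu with ⟨hu0, hu1⟩
      have habs : |(-(Real.pi * u * x)) - (-(Real.pi * u * 1))| ≤ Real.pi / 100 := by
        rw [show (-(Real.pi * u * x)) - (-(Real.pi * u * 1)) = (Real.pi * u) * (1 - x) by ring,
          abs_mul]
        rw [abs_of_nonneg (by positivity)]
        calc Real.pi * u * |1 - x| ≤ Real.pi * 1 * (1/100) := by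
              apply mul_le_mul _ (by rw [abs_sub_comm]; exact hx) (abs_nonneg _) (by positivity)
              nlinarith [Real.pi_pos]
          _ = Real.pi / 100 := by ring
      calc ‖g u - g1 u‖ ≤ 2 * |(-(Real.pi * u * x)) - (-(Real.pi * u * 1))| :=
            exp_diff (le_trans habs (by nlinarith [Real.pi_lt_d2]))
        _ ≤ 2 * (Real.pi / 100) := by linarith
        _ = Real.pi / 50 := by ring
    calc ‖∫ u in Set.Ico (0:ℝ) 1, (g u - g1 u)‖
        ≤ (Real.pi / 50) * (volume (Set.Ico (0:ℝ) 1)).toReal :=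
          MeasureTheory.norm_setIntegral_le_of_norm_le_const hIcofin hb
      _ = Real.pi / 50 := by simp [Real.volume_Ico]
  have hCone : ‖∫ u in Set.Ico (0:ℝ) 1, g1 u‖ = 2 / Real.pi := Cone_val'
  have h1 : ‖∫ u in Set.Ico (0:ℝ) 1, g u‖ ≥ 2 / Real.pi - Real.pi / 50 := by
    have := norm_sub_norm_le (∫ u in Set.Ico (0:ℝ) 1, g1 u) (∫ u in Set.Ico (0:ℝ) 1, g u)
    rw [hCone, norm_sub_rev] at this
    linarith [hdiff]
  have h2 : ‖BB x y‖ ≥ ‖∫ u in Set.Ico (0:ℝ) 1, g u‖ - 1/100 := by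
    rw [BB_eq]
    have heq : (∫ u in Sx y, g u) = (∫ u in Set.Ico (0:ℝ) 1, g u) - ∫ u in U, g u := by
      rw [hsplit]; ring
    calc ‖∫ u in Sx y, g u‖ = ‖(∫ u in Set.Ico (0:ℝ) 1, g u) - ∫ u in U, g u‖ := by rw [heq]
      _ ≥ ‖∫ u in Set.Ico (0:ℝ) 1, g u‖ - ‖∫ u in U, g u‖ := norm_sub_norm_le _ _
      _ ≥ ‖∫ u in Set.Ico (0:ℝ) 1, g u‖ - 1/100 := by linarith [hU_bound]
  have hpi1 : (2:ℝ)/3.15 ≤ 2/Real.pi := by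
    apply div_le_div_of_nonneg_left (by norm_num) Real.pi_pos (le_of_lt Real.pi_lt_d2)
  have hpi2 : Real.pi / 50 ≤ 3.15/50 := by linarith [Real.pi_lt_d2]
  have : (0.56:ℝ) ≤ 2/Real.pi - Real.pi/50 - 1/100 := by linarith [hpi1, hpi2]
  linarith

lemma phi2_center {w : ℝ × ℝ} (h1 : |w.1 - 1| ≤ 1/100) (h2 : |w.2 - 1| ≤ 1/100) :
    (0.31:ℝ) ≤ ‖tConv phi1 phi1 w‖ := by
  rw [phi2_eq, norm_mul]
  calc (0.31:ℝ) ≤ 0.56 * 0.56 := by norm_num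
    _ ≤ ‖AA w.1 w.2‖ * ‖BB w.1 w.2‖ :=
        mul_le_mul (AA_center h1 h2) (BB_center h1 h2) (by norm_num) (norm_nonneg _)


lemma phi1_meas : Measurable phi1 := by
  unfold phi1
  exact Measurable.ite
    ((measurableSet_Ico.preimage measurable_fst).inter
      (measurableSet_Ico.preimage measurable_snd))
    measurable_const measurable_const

lemma phi2_meas : StronglyMeasurable (tConv phi1 phi1) := by
  have hF : StronglyMeasurable (fun z : (ℝ × ℝ) × (ℝ × ℝ) =>
      phi1 (z.1.1 - z.2.1, z.1.2 - z.2.2) * phi1 z.2 *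
        Complex.exp (Real.pi * Complex.I * ((z.2.1 : ℂ) * z.1.2 - (z.2.2 : ℂ) * z.1.1))) := by
    apply Measurable.stronglyMeasurable
    refine Measurable.mul (Measurable.mul ?_ ?_) ?_
    · exact phi1_meas.comp (by fun_prop)
    · exact phi1_meas.comp measurable_snd
    · apply Complex.measurable_exp.comp
      fun_prop
  exact hF.integral_prod_right'

lemma norm_tT (k l : ℤ) (φ : ℝ × ℝ → ℂ) (z : ℝ × ℝ) :
    ‖tT k l φ z‖ = ‖φ (z.1 - k, z.2 - l)‖ := by
  unfold tT
  rw [norm_mul]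
  rw [show (Real.pi : ℂ) * Complex.I * ((l : ℂ) * z.1 - (k : ℂ) * z.2) =
      ((Real.pi * (l * z.1 - k * z.2) : ℝ) : ℂ) * Complex.I by push_cast; ring]
  rw [norm_exp_unimodular, one_mul]

lemma quad_helper {a b nn : ℝ} (ha : 0 ≤ a) (hb : 0 ≤ b) (hn : 0 ≤ nn)
    (h : a - b ≤ nn) : a^2/2 - b^2 ≤ nn^2 := by
  rcases le_or_gt a b with hc | hc
  · nlinarith
  · nlinarith [mul_self_le_mul_self (show (0:ℝ) ≤ a - b by linarith) h, sq_nonneg (a - 2*b)]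

end RieszAux
set_option maxHeartbeats 2000000 in
theorem phi2_riesz_sequence :
    ∃ A B : ℝ, 0 < A ∧ 0 < B ∧
      ∀ (s : Finset (ℤ × ℤ)) (c : ℤ × ℤ → ℂ),
        A * ∑ p ∈ s, ‖c p‖ ^ 2 ≤
            (∫ z : ℝ × ℝ, ‖∑ p ∈ s, c p * tT p.1 p.2 (phiN 2) z‖ ^ 2) ∧
        (∫ z : ℝ × ℝ, ‖∑ p ∈ s, c p * tT p.1 p.2 (phiN 2) z‖ ^ 2) ≤
          B * ∑ p ∈ s, ‖c p‖ ^ 2 := by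
  classical
  rw [RieszAux.phiN_two]
  refine ⟨1/100000, 16, by norm_num, by norm_num, fun s c => ?_⟩
  set φ : ℝ × ℝ → ℂ := tConv phi1 phi1 with hφ
  set h : ℝ × ℝ → ℂ := fun z => ∑ p ∈ s, c p * tT p.1 p.2 φ z with hh
  -- measurability
  have hφm : Measurable φ := RieszAux.phi2_meas.measurable
  have htTm : ∀ p : ℤ × ℤ, Measurable (fun z : ℝ × ℝ => tT p.1 p.2 φ z) := by
    intro p
    unfold tT
    apply Measurable.mul
    · apply Complex.measurable_exp.comp
      fun_prop
    · exact hφm.comp (by fun_prop)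
  have hhm : Measurable h := by
    apply Finset.measurable_sum
    intro p _
    exact (htTm p).const_mul (c p)
  -- overlap squares
  set Q : ℤ × ℤ → Set (ℝ × ℝ) := fun p =>
    (Set.Ico (p.1:ℝ) ((p.1:ℝ)+2)) ×ˢ (Set.Ico (p.2:ℝ) ((p.2:ℝ)+2)) with hQ
  have hQmeas : ∀ p, MeasurableSet (Q p) := fun p =>
    measurableSet_Ico.prod measurableSet_Ico
  have hQvol : ∀ p, volume (Q p) = ENNReal.ofReal 4 := by
    intro p
    rw [hQ]
    rw [MeasureTheory.Measure.volume_eq_prod, MeasureTheory.Measure.prod_prod,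
      Real.volume_Ico, Real.volume_Ico]
    rw [show (p.1:ℝ) + 2 - p.1 = 2 by ring, show (p.2:ℝ) + 2 - p.2 = 2 by ring]
    rw [← ENNReal.ofReal_mul (by norm_num)]
    norm_num
  set ind : ℤ × ℤ → ℝ × ℝ → ℝ := fun p => Set.indicator (Q p) (fun _ => (1:ℝ)) with hind
  have hind_cases : ∀ p z, ind p z = if z ∈ Q p then 1 else 0 := fun p z =>
    Set.indicator_apply _ _ _
  have hind_nonneg : ∀ p z, 0 ≤ ind p z := by
    intro p z; rw [hind_cases]; split <;> norm_num
  have hind_le_one : ∀ p z, ind p z ≤ 1 := by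
    intro p z; rw [hind_cases]; split <;> norm_num
  have hind_sq : ∀ p z, ind p z * ind p z = ind p z := by
    intro p z; rw [hind_cases]; split <;> norm_num
  -- pointwise domination
  have htT_le : ∀ (p : ℤ × ℤ) (z : ℝ × ℝ), ‖tT p.1 p.2 φ z‖ ≤ ind p z := by
    intro p z
    rw [RieszAux.norm_tT, hind_cases]
    by_cases hzQ : z ∈ Q p
    · rw [if_pos hzQ]
      exact RieszAux.phi2_le_one _
    · rw [if_neg hzQ]
      rw [hQ] at hzQ
      simp only [Set.mem_prod, Set.mem_Ico, not_and_or, not_le, not_lt] at hzQ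
      have : φ (z.1 - p.1, z.2 - p.2) = 0 := by
        apply RieszAux.phi2_zero
        simp only
        rcases hzQ with (hc | hc) | (hc | hc)
        · exact Or.inl (by linarith)
        · exact Or.inr (Or.inl (by linarith))
        · exact Or.inr (Or.inr (Or.inl (by linarith)))
        · exact Or.inr (Or.inr (Or.inr (by linarith)))
      rw [this, norm_zero]
  have hcount : ∀ z : ℝ × ℝ, (∑ p ∈ s, ind p z) ≤ 4 := by
    intro z
    have h1 : (∑ p ∈ s, ind p z) = ((s.filter (fun p => z ∈ Q p)).card : ℝ) := by
      rw [Finset.card_filter]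
      push_cast
      rw [Finset.sum_congr rfl (fun p _ => hind_cases p z)]
    rw [h1]
    have h2 : s.filter (fun p => z ∈ Q p) ⊆
        ({⌊z.1⌋ - 1, ⌊z.1⌋} : Finset ℤ) ×ˢ ({⌊z.2⌋ - 1, ⌊z.2⌋} : Finset ℤ) := by
      intro p hp
      rw [Finset.mem_filter] at hp
      obtain ⟨_, hzp⟩ := hp
      rw [hQ] at hzp
      obtain ⟨⟨ha1, ha2⟩, ⟨hb1, hb2⟩⟩ := hzp
      rw [Finset.mem_product]
      constructor
      · have hle : p.1 ≤ ⌊z.1⌋ := Int.le_floor.mpr ha1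
        have hlt : ⌊z.1⌋ < p.1 + 2 := by
          have := Int.floor_le z.1
          have : (⌊z.1⌋ : ℝ) < p.1 + 2 := by linarith
          exact_mod_cast this
        simp only [Finset.mem_insert, Finset.mem_singleton]
        omega
      · have hle : p.2 ≤ ⌊z.2⌋ := Int.le_floor.mpr hb1
        have hlt : ⌊z.2⌋ < p.2 + 2 := by
          have := Int.floor_le z.2
          have : (⌊z.2⌋ : ℝ) < p.2 + 2 := by linarith
          exact_mod_cast this
        simp only [Finset.mem_insert, Finset.mem_singleton]
        omega
    have h3 := Finset.card_le_card h2
    have h4 : (({⌊z.1⌋ - 1, ⌊z.1⌋} : Finset ℤ) ×ˢ ({⌊z.2⌋ - 1, ⌊z.2⌋} : Finset ℤ)).card ≤ 4 := by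
      rw [Finset.card_product]
      calc ({⌊z.1⌋ - 1, ⌊z.1⌋} : Finset ℤ).card * ({⌊z.2⌋ - 1, ⌊z.2⌋} : Finset ℤ).card
          ≤ 2 * 2 := Nat.mul_le_mul (le_trans (Finset.card_insert_le _ _) (by simp))
            (le_trans (Finset.card_insert_le _ _) (by simp))
        _ = 4 := by norm_num
    calc ((s.filter (fun p => z ∈ Q p)).card : ℝ) ≤ ((4:ℕ) : ℝ) := by
          exact_mod_cast le_trans h3 h4
      _ = 4 := by norm_num
  have hpt : ∀ z : ℝ × ℝ, ‖h z‖^2 ≤ 4 * ∑ p ∈ s, ‖c p‖^2 * ind p z := by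
    intro z
    have step1 : ‖h z‖ ≤ ∑ p ∈ s, ‖c p‖ * ind p z := by
      rw [hh]
      refine le_trans (norm_sum_le _ _) (Finset.sum_le_sum ?_)
      intro p _
      rw [norm_mul]
      exact mul_le_mul_of_nonneg_left (htT_le p z) (norm_nonneg _)
    have step2 : (∑ p ∈ s, ‖c p‖ * ind p z)^2 ≤
        (∑ p ∈ s, ‖c p‖^2 * ind p z) * (∑ p ∈ s, ind p z) := by
      have hrw : (∑ p ∈ s, ‖c p‖ * ind p z) =
          ∑ p ∈ s, (‖c p‖ * ind p z) * ind p z := by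
        refine Finset.sum_congr rfl fun p _ => ?_
        rw [mul_assoc, hind_sq]
      rw [hrw]
      calc (∑ p ∈ s, (‖c p‖ * ind p z) * ind p z)^2
          ≤ (∑ p ∈ s, (‖c p‖ * ind p z)^2) * (∑ p ∈ s, (ind p z)^2) :=
            Finset.sum_mul_sq_le_sq_mul_sq s _ _
        _ = (∑ p ∈ s, ‖c p‖^2 * ind p z) * (∑ p ∈ s, ind p z) := by
            congr 1
            · refine Finset.sum_congr rfl fun p _ => ?_
              rw [mul_pow, pow_two (ind p z), hind_sq]
            · refine Finset.sum_congr rfl fun p _ => ?_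
              rw [pow_two, hind_sq]
    have step3 : (∑ p ∈ s, ‖c p‖^2 * ind p z) * (∑ p ∈ s, ind p z) ≤
        (∑ p ∈ s, ‖c p‖^2 * ind p z) * 4 := by
      apply mul_le_mul_of_nonneg_left (hcount z)
      exact Finset.sum_nonneg fun p _ => mul_nonneg (by positivity) (hind_nonneg p z)
    calc ‖h z‖^2 ≤ (∑ p ∈ s, ‖c p‖ * ind p z)^2 := by
          apply pow_le_pow_left₀ (norm_nonneg _) step1
      _ ≤ (∑ p ∈ s, ‖c p‖^2 * ind p z) * 4 := le_trans step2 step3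
      _ = 4 * ∑ p ∈ s, ‖c p‖^2 * ind p z := by ring
  -- integrability
  have hind_int : ∀ p, MeasureTheory.Integrable (fun z => ind p z) := by
    intro p
    rw [hind]
    rw [MeasureTheory.integrable_indicator_iff (hQmeas p)]
    exact MeasureTheory.integrableOn_const (by rw [hQvol]; simp)
  have hdom_int : MeasureTheory.Integrable
      (fun z => 4 * ∑ p ∈ s, ‖c p‖^2 * ind p z) := by
    apply MeasureTheory.Integrable.const_mul
    apply MeasureTheory.integrable_finset_sum
    intro p _
    exact (hind_int p).const_mul _
  have hint : MeasureTheory.Integrable (fun z => ‖h z‖^2) := by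
    refine MeasureTheory.Integrable.mono' hdom_int
      ((hhm.norm.pow_const 2).aestronglyMeasurable) ?_
    refine Filter.Eventually.of_forall fun z => ?_
    rw [Real.norm_eq_abs, abs_of_nonneg (by positivity)]
    exact hpt z
  have hdom_val : (∫ z : ℝ × ℝ, 4 * ∑ p ∈ s, ‖c p‖^2 * ind p z)
      = 16 * ∑ p ∈ s, ‖c p‖^2 := by
    rw [MeasureTheory.integral_const_mul]
    rw [MeasureTheory.integral_finset_sum _ (fun p _ => (hind_int p).const_mul _)]
    have : ∀ p ∈ s, (∫ z : ℝ × ℝ, ‖c p‖^2 * ind p z) = ‖c p‖^2 * 4 := by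
      intro p _
      rw [MeasureTheory.integral_const_mul]
      congr 1
      rw [hind, MeasureTheory.integral_indicator_const _ (hQmeas p)]
      rw [measureReal_def, hQvol]
      simp [ENNReal.toReal_ofReal]
    rw [Finset.sum_congr rfl this, ← Finset.sum_mul]
    ring
  constructor
  · -- LOWER BOUND
    -- boxes around the lattice points m + (1,1)
    set box : ℤ × ℤ → Set (ℝ × ℝ) := fun m =>
      (Set.Ioo ((m.1:ℝ)+1-1/100) ((m.1:ℝ)+1+1/100)) ×ˢ
      (Set.Ioo ((m.2:ℝ)+1-1/100) ((m.2:ℝ)+1+1/100)) with hbox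
    have hboxmeas : ∀ m, MeasurableSet (box m) := fun m =>
      measurableSet_Ioo.prod measurableSet_Ioo
    have hboxvol : ∀ m, volume (box m) = ENNReal.ofReal (1/2500) := by
      intro m
      rw [hbox]
      rw [MeasureTheory.Measure.volume_eq_prod, MeasureTheory.Measure.prod_prod,
        Real.volume_Ioo, Real.volume_Ioo]
      rw [show (m.1:ℝ)+1+1/100 - ((m.1:ℝ)+1-1/100) = 1/50 by ring,
          show (m.2:ℝ)+1+1/100 - ((m.2:ℝ)+1-1/100) = 1/50 by ring]
      rw [← ENNReal.ofReal_mul (by norm_num)]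
      norm_num
    set n : ℤ × ℤ → ℝ := fun p => if p ∈ s then ‖c p‖ else 0 with hn
    have hn_nonneg : ∀ p, 0 ≤ n p := by
      intro p
      rw [hn]
      dsimp only
      split
      · exact norm_nonneg _
      · exact le_refl 0
    set E9 : Finset (ℤ × ℤ) := ({-1,0,1} : Finset ℤ) ×ˢ ({-1,0,1} : Finset ℤ) with hE9
    set R : ℤ × ℤ → ℝ := fun m => ∑ e ∈ E9, n (m - e) with hR
    set P : ℤ × ℤ → ℝ := fun m => ∑ e ∈ E9, (n (m - e))^2 with hP
    have hR_nonneg : ∀ m, 0 ≤ R m := fun m =>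
      Finset.sum_nonneg fun e _ => hn_nonneg _
    -- the key pointwise estimate on each box
    have hpoint : ∀ m ∈ s, ∀ z ∈ box m,
        (0.31:ℝ) * ‖c m‖ - (1/100) * R m ≤ ‖h z‖ := by
      intro m hm z hz
      have hz1 : z.1 ∈ Set.Ioo ((m.1:ℝ)+1-1/100) ((m.1:ℝ)+1+1/100) := hz.1
      have hz2 : z.2 ∈ Set.Ioo ((m.2:ℝ)+1-1/100) ((m.2:ℝ)+1+1/100) := hz.2
      have hz1' : |z.1 - (m.1:ℝ) - 1| ≤ 1/100 := by
        rw [abs_le]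
        constructor
        · linarith [hz1.1]
        · linarith [hz1.2]
      have hz2' : |z.2 - (m.2:ℝ) - 1| ≤ 1/100 := by
        rw [abs_le]
        constructor
        · linarith [hz2.1]
        · linarith [hz2.2]
      set D : Finset (ℤ × ℤ) := E9.image (fun e => m - e) with hD
      have hmemD : ∀ p, p ∈ D ↔ m - p ∈ E9 := by
        intro p
        rw [hD, Finset.mem_image]
        constructor
        · rintro ⟨e, he, rfl⟩
          simpa using he
        · intro hp
          exact ⟨m - p, hp, by simp⟩
      have hsum_eq : h z = ∑ p ∈ s.filter (· ∈ D), c p * tT p.1 p.2 φ z := by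
        rw [hh]
        dsimp only
        rw [Finset.sum_filter_of_ne]
        intro p hp hne
        by_contra hpD
        apply hne
        have hE : m - p ∉ E9 := fun hcon => hpD ((hmemD p).mpr hcon)
        rw [hE9, Finset.mem_product] at hE
        rw [not_and_or] at hE
        have hφ0 : φ (z.1 - (p.1:ℝ), z.2 - (p.2:ℝ)) = 0 := by
          apply RieszAux.phi2_zero
          simp only
          rcases hE with hc | hc
          · simp only [Prod.fst_sub, Finset.mem_insert, Finset.mem_singleton] at hc
            push_neg at hc
            have hcc : m.1 - p.1 ≤ -2 ∨ 2 ≤ m.1 - p.1 := by omega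
            rcases hcc with hcc | hcc
            · left
              have : (m.1:ℝ) - p.1 ≤ -2 := by exact_mod_cast hcc
              linarith [hz1.2]
            · right; left
              have : (2:ℝ) ≤ (m.1:ℝ) - p.1 := by exact_mod_cast hcc
              linarith [hz1.1]
          · simp only [Prod.snd_sub, Finset.mem_insert, Finset.mem_singleton] at hc
            push_neg at hc
            have hcc : m.2 - p.2 ≤ -2 ∨ 2 ≤ m.2 - p.2 := by omega
            rcases hcc with hcc | hcc
            · right; right; left
              have : (m.2:ℝ) - p.2 ≤ -2 := by exact_mod_cast hcc
              linarith [hz2.2]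
            · right; right; right
              have : (2:ℝ) ≤ (m.2:ℝ) - p.2 := by exact_mod_cast hcc
              linarith [hz2.1]
        have htT0 : tT p.1 p.2 φ z = 0 := by
          unfold tT
          rw [hφ0, mul_zero]
        rw [htT0, mul_zero]
      have hmf : m ∈ s.filter (· ∈ D) := by
        refine Finset.mem_filter.mpr ⟨hm, (hmemD m).mpr ?_⟩
        rw [sub_self]
        rw [hE9]
        decide
      have hsplit2 : ∑ p ∈ s.filter (· ∈ D), c p * tT p.1 p.2 φ z
          = c m * tT m.1 m.2 φ z +
            ∑ p ∈ (s.filter (· ∈ D)).erase m, c p * tT p.1 p.2 φ z :=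
        (Finset.add_sum_erase _ _ hmf).symm
      have hcenter : (0.31:ℝ) * ‖c m‖ ≤ ‖c m * tT m.1 m.2 φ z‖ := by
        rw [norm_mul, RieszAux.norm_tT]
        calc (0.31:ℝ) * ‖c m‖
            ≤ ‖φ (z.1 - (m.1:ℝ), z.2 - (m.2:ℝ))‖ * ‖c m‖ := by
              apply mul_le_mul_of_nonneg_right _ (norm_nonneg _)
              exact RieszAux.phi2_center (by simpa using hz1') (by simpa using hz2')
          _ = ‖c m‖ * ‖φ (z.1 - (m.1:ℝ), z.2 - (m.2:ℝ))‖ := by ring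
      have htail : ‖∑ p ∈ (s.filter (· ∈ D)).erase m, c p * tT p.1 p.2 φ z‖
          ≤ (1/100) * R m := by
        refine le_trans (norm_sum_le _ _) ?_
        have hterm : ∀ p ∈ (s.filter (· ∈ D)).erase m,
            ‖c p * tT p.1 p.2 φ z‖ ≤ (1/100) * n p := by
          intro p hp
          obtain ⟨hpne, hpf⟩ := Finset.mem_erase.mp hp
          obtain ⟨hps, hpD⟩ := Finset.mem_filter.mp hpf
          rw [norm_mul, RieszAux.norm_tT]
          have hsmall : ‖φ (z.1 - (p.1:ℝ), z.2 - (p.2:ℝ))‖ ≤ 1/100 := by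
            apply RieszAux.phi2_small
            have hE : m - p ∈ E9 := (hmemD p).mp hpD
            rw [hE9, Finset.mem_product] at hE
            simp only [Prod.fst_sub, Prod.snd_sub, Finset.mem_insert,
              Finset.mem_singleton] at hE
            have hne' : m.1 - p.1 ≠ 0 ∨ m.2 - p.2 ≠ 0 := by
              by_contra hcc
              push_neg at hcc
              exact hpne (Prod.ext_iff.mpr ⟨by omega, by omega⟩)
            simp only
            rcases hne' with hne' | hne'
            · have hcc : m.1 - p.1 = -1 ∨ m.1 - p.1 = 1 := by
                rcases hE.1 with hc | hc | hc <;> omega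
              rcases hcc with hcc | hcc
              · left
                have : (m.1:ℝ) - p.1 = -1 := by exact_mod_cast hcc
                linarith [hz1.2]
              · right; left
                have : (m.1:ℝ) - p.1 = 1 := by exact_mod_cast hcc
                linarith [hz1.1]
            · have hcc : m.2 - p.2 = -1 ∨ m.2 - p.2 = 1 := by
                rcases hE.2 with hc | hc | hc <;> omega
              rcases hcc with hcc | hcc
              · right; right; left
                have : (m.2:ℝ) - p.2 = -1 := by exact_mod_cast hcc
                linarith [hz2.2]
              · right; right; right
                have : (m.2:ℝ) - p.2 = 1 := by exact_mod_cast hcc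
                linarith [hz2.1]
          calc ‖c p‖ * ‖φ (z.1 - (p.1:ℝ), z.2 - (p.2:ℝ))‖
              ≤ ‖c p‖ * (1/100) := mul_le_mul_of_nonneg_left hsmall (norm_nonneg _)
            _ = (1/100) * n p := by
                rw [hn]
                dsimp only
                rw [if_pos hps]
                ring
        refine le_trans (Finset.sum_le_sum hterm) ?_
        rw [← Finset.mul_sum]
        apply mul_le_mul_of_nonneg_left _ (by norm_num)
        have hDsum : ∑ p ∈ D, n p = R m := by
          rw [hD, hR, Finset.sum_image]
          intro x _ y _ hxy
          exact sub_right_injective hxy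
        calc ∑ p ∈ (s.filter (· ∈ D)).erase m, n p
            ≤ ∑ p ∈ D, n p := by
              apply Finset.sum_le_sum_of_subset_of_nonneg
              · intro p hp
                exact (Finset.mem_filter.mp (Finset.mem_of_mem_erase hp)).2
              · intro p _ _
                exact hn_nonneg p
          _ = R m := hDsum
      calc (0.31:ℝ) * ‖c m‖ - (1/100) * R m
          ≤ ‖c m * tT m.1 m.2 φ z‖ -
            ‖∑ p ∈ (s.filter (· ∈ D)).erase m, c p * tT p.1 p.2 φ z‖ := by
            linarith [hcenter, htail]
        _ ≤ ‖c m * tT m.1 m.2 φ z +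
            ∑ p ∈ (s.filter (· ∈ D)).erase m, c p * tT p.1 p.2 φ z‖ := by
            have := norm_sub_norm_le (c m * tT m.1 m.2 φ z)
              (-(∑ p ∈ (s.filter (· ∈ D)).erase m, c p * tT p.1 p.2 φ z))
            rw [norm_neg, sub_neg_eq_add] at this
            linarith
        _ = ‖h z‖ := by rw [hsum_eq, hsplit2]
    -- squared pointwise estimate
    have hL : ∀ m ∈ s, ∀ z ∈ box m,
        (0.048:ℝ)*‖c m‖^2 - 0.0009 * P m ≤ ‖h z‖^2 := by
      intro m hm z hz
      have h13 := hpoint m hm z hz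
      have hR2 : (R m)^2 ≤ 9 * P m := by
        rw [hR, hP]
        have hcheb := sq_sum_le_card_mul_sum_sq (s := E9) (f := fun e => n (m - e))
        have hcard9 : E9.card = 9 := by rw [hE9]; rfl
        have hcard : (E9.card : ℝ) = 9 := by rw [hcard9]; norm_num
        calc (∑ e ∈ E9, n (m - e))^2 ≤ (E9.card : ℝ) * ∑ e ∈ E9, (n (m - e))^2 := hcheb
          _ = 9 * ∑ e ∈ E9, (n (m - e))^2 := by rw [hcard]
      have hq := RieszAux.quad_helper (a := 0.31*‖c m‖) (b := (1/100)*R m) (nn := ‖h z‖)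
        (by positivity) (by positivity) (norm_nonneg _) h13
      nlinarith [hq, hR2, sq_nonneg (‖c m‖)]
    -- lower bound on each box integral
    have hbox_lower : ∀ m ∈ s,
        ((0.048:ℝ)*‖c m‖^2 - 0.0009 * P m) * (1/2500) ≤ ∫ z in box m, ‖h z‖^2 := by
      intro m hm
      have hge := MeasureTheory.setIntegral_ge_of_const_le (hboxmeas m)
        (by rw [hboxvol]; exact ENNReal.ofReal_ne_top) (hL m hm) hint.integrableOn
      rw [measureReal_def, hboxvol, ENNReal.toReal_ofReal (by norm_num), smul_eq_mul] at hge
      linarith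
    -- disjointness of boxes
    have hdisj : (↑s : Set (ℤ×ℤ)).Pairwise (Function.onFun Disjoint box) := by
      intro m _ m' _ hne
      have hcoord : m.1 ≠ m'.1 ∨ m.2 ≠ m'.2 := by
        by_contra hcc
        push_neg at hcc
        exact hne (Prod.ext_iff.mpr ⟨hcc.1, hcc.2⟩)
      rw [Function.onFun]
      rw [Set.disjoint_left]
      intro z hzm hzm'
      have h1 := hzm.1
      have h2 := hzm.2
      have h1' := hzm'.1
      have h2' := hzm'.2
      simp only [Set.mem_Ioo] at h1 h2 h1' h2'
      rcases hcoord with hd | hd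
      · rcases lt_or_gt_of_ne hd with hlt | hlt
        · have : (m.1:ℝ) + 1 ≤ (m'.1:ℝ) := by exact_mod_cast by omega
          linarith [h1.2, h1'.1]
        · have : (m'.1:ℝ) + 1 ≤ (m.1:ℝ) := by exact_mod_cast by omega
          linarith [h1.1, h1'.2]
      · rcases lt_or_gt_of_ne hd with hlt | hlt
        · have : (m.2:ℝ) + 1 ≤ (m'.2:ℝ) := by exact_mod_cast by omega
          linarith [h2.2, h2'.1]
        · have : (m'.2:ℝ) + 1 ≤ (m.2:ℝ) := by exact_mod_cast by omega
          linarith [h2.1, h2'.2]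
    have hunion_le : ∑ m ∈ s, ∫ z in box m, ‖h z‖^2 ≤ ∫ z : ℝ×ℝ, ‖h z‖^2 := by
      rw [← MeasureTheory.integral_biUnion_finset s (fun m _ => hboxmeas m) hdisj
        (fun m _ => hint.integrableOn)]
      exact MeasureTheory.setIntegral_le_integral hint
        (Filter.Eventually.of_forall fun z => by positivity)
    have hPsum : ∑ m ∈ s, P m ≤ 9 * ∑ p ∈ s, ‖c p‖^2 := by
      have hcomm : ∑ m ∈ s, P m = ∑ e ∈ E9, ∑ m ∈ s, (n (m - e))^2 := by
        rw [hP]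
        exact Finset.sum_comm
      have hper : ∀ e : ℤ × ℤ, ∑ m ∈ s, (n (m - e))^2 ≤ ∑ p ∈ s, ‖c p‖^2 := by
        intro e
        have himg : ∑ m ∈ s, (n (m - e))^2
            = ∑ p ∈ s.image (fun m => m - e), (n p)^2 := by
          rw [Finset.sum_image]
          intro x _ y _ hxy
          have := sub_left_injective hxy
          exact this
        rw [himg]
        have h1 : ∑ p ∈ (s.image (fun m => m - e)).filter (· ∈ s), (n p)^2
            = ∑ p ∈ s.image (fun m => m - e), (n p)^2 := by
          apply Finset.sum_subset (Finset.filter_subset _ _)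
          intro p hp hpn
          have hns : p ∉ s := by
            intro hc
            exact hpn (Finset.mem_filter.mpr ⟨hp, hc⟩)
          rw [hn]
          dsimp only
          rw [if_neg hns]
          norm_num
        rw [← h1]
        calc ∑ p ∈ (s.image (fun m => m - e)).filter (· ∈ s), (n p)^2
            ≤ ∑ p ∈ s, (n p)^2 := by
              apply Finset.sum_le_sum_of_subset_of_nonneg
              · intro p hp
                exact (Finset.mem_filter.mp hp).2
              · intro p _ _
                positivity
          _ = ∑ p ∈ s, ‖c p‖^2 := by
              refine Finset.sum_congr rfl fun p hp => ?_
              rw [hn]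
              dsimp only
              rw [if_pos hp]
      have hcard9 : E9.card = 9 := by rw [hE9]; rfl
      have hcard : (E9.card : ℝ) = 9 := by rw [hcard9]; norm_num
      calc ∑ m ∈ s, P m = ∑ e ∈ E9, ∑ m ∈ s, (n (m - e))^2 := hcomm
        _ ≤ ∑ _e ∈ E9, ∑ p ∈ s, ‖c p‖^2 := Finset.sum_le_sum fun e _ => hper e
        _ = (E9.card : ℝ) * ∑ p ∈ s, ‖c p‖^2 := by
            rw [Finset.sum_const, nsmul_eq_mul]
        _ = 9 * ∑ p ∈ s, ‖c p‖^2 := by rw [hcard]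
    -- final assembly
    have hcsum_nonneg : (0:ℝ) ≤ ∑ p ∈ s, ‖c p‖^2 := by positivity
    calc (1/100000) * ∑ p ∈ s, ‖c p‖^2
        ≤ (∑ m ∈ s, ((0.048:ℝ)*‖c m‖^2 - 0.0009 * P m)) * (1/2500) := by
          rw [Finset.sum_sub_distrib]
          rw [← Finset.mul_sum, ← Finset.mul_sum]
          nlinarith [hPsum, hcsum_nonneg]
      _ = ∑ m ∈ s, ((0.048:ℝ)*‖c m‖^2 - 0.0009 * P m) * (1/2500) := by
          rw [Finset.sum_mul]
      _ ≤ ∑ m ∈ s, ∫ z in box m, ‖h z‖^2 := Finset.sum_le_sum hbox_lower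
      _ ≤ ∫ z : ℝ×ℝ, ‖h z‖^2 := hunion_le
  · -- upper bound
    calc (∫ z : ℝ × ℝ, ‖h z‖^2) ≤ (∫ z : ℝ × ℝ, 4 * ∑ p ∈ s, ‖c p‖^2 * ind p z) :=
        MeasureTheory.integral_mono hint hdom_int hpt
      _ = 16 * ∑ p ∈ s, ‖c p‖^2 := hdom_val
end

section
/- For every n ∈ ℕ there is a constant B > 0 such that ‖Σ_{k,l} c_{k,l} T^t_{(k,l)} φ_n‖²_{L²(ℝ²)} ≤ B ‖{c_{k,l}}‖²_{ℓ²(ℤ²)} for all finite sequences {c_{k,l}} (i.e., the twisted translates of φ_n form a Bessel sequence); one may take B = ‖φ₁‖^{2(n-1)}·B₂ for the constant B₂ of φ₂. -/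
open MeasureTheory

-- aux
def unitSq : Set (ℝ × ℝ) := Set.Ico (0:ℝ) 1 ×ˢ Set.Ico (0:ℝ) 1

lemma measurableSet_unitSq : MeasurableSet unitSq :=
  (measurableSet_Ico).prod (measurableSet_Ico)

lemma phi1_eq_indicator : phi1 = unitSq.indicator (fun _ => 1) := by
  funext p
  simp only [phi1, unitSq, Set.indicator, Set.mem_prod]

lemma volume_unitSq : volume unitSq = 1 := by
  rw [unitSq, show (volume : Measure (ℝ × ℝ)) = (volume : Measure ℝ).prod volume from rfl,
    Measure.prod_prod]
  simp

lemma norm_exp_pi_mul_I (r : ℝ) :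
    ‖Complex.exp ((Real.pi : ℂ) * Complex.I * (r : ℂ))‖ = 1 := by
  have : (Real.pi : ℂ) * Complex.I * (r : ℂ) = ((Real.pi * r : ℝ) : ℂ) * Complex.I := by
    push_cast; ring
  rw [this]
  exact Complex.norm_exp_ofReal_mul_I _

lemma norm_exp_tT (k l : ℤ) (p : ℝ × ℝ) :
    ‖Complex.exp (Real.pi * Complex.I * ((l : ℂ) * p.1 - (k : ℂ) * p.2))‖ = 1 := by
  have h : ((l : ℂ) * p.1 - (k : ℂ) * p.2) = ((l * p.1 - k * p.2 : ℝ) : ℂ) := by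
    push_cast; ring
  rw [h]; exact norm_exp_pi_mul_I _

lemma norm_exp_tConv (q p : ℝ × ℝ) :
    ‖Complex.exp (Real.pi * Complex.I * ((q.1 : ℂ) * p.2 - (q.2 : ℂ) * p.1))‖ = 1 := by
  have h : ((q.1 : ℂ) * p.2 - (q.2 : ℂ) * p.1) = ((q.1 * p.2 - q.2 * p.1 : ℝ) : ℂ) := by
    push_cast; ring
  rw [h]; exact norm_exp_pi_mul_I _

lemma measurable_tConv_phi1 {F : ℝ × ℝ → ℂ} (hF : Measurable F) :
    Measurable (tConv F phi1) := by
  have h : StronglyMeasurable (fun pq : (ℝ × ℝ) × (ℝ × ℝ) =>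
      F (pq.1.1 - pq.2.1, pq.1.2 - pq.2.2) * phi1 pq.2 *
      Complex.exp (Real.pi * Complex.I *
        ((pq.2.1 : ℂ) * pq.1.2 - (pq.2.2 : ℂ) * pq.1.1))) := by
    apply Measurable.stronglyMeasurable
    apply Measurable.mul
    · apply Measurable.mul
      · exact hF.comp (by fun_prop)
      · exact measurable_phi1.comp measurable_snd
    · exact Complex.measurable_exp.comp (by fun_prop)
  exact h.integral_prod_right'.measurable

lemma measurable_phiN (n : ℕ) : Measurable (phiN n) := by
  induction n using Nat.strong_induction_on with
  | _ n ih =>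
    match n with
    | 0 => exact measurable_const
    | 1 => exact measurable_phi1
    | (m+2) => exact measurable_tConv_phi1 (ih (m+1) (by omega))

lemma norm_tConv_phi1_le {F : ℝ × ℝ → ℂ} (hF : ∀ p, ‖F p‖ ≤ 1) (p : ℝ × ℝ) :
    ‖tConv F phi1 p‖ ≤ 1 := by
  have h1 : ‖tConv F phi1 p‖ ≤ ∫ q : ℝ × ℝ, ‖F (p.1 - q.1, p.2 - q.2) * phi1 q *
      Complex.exp (Real.pi * Complex.I * ((q.1 : ℂ) * p.2 - (q.2 : ℂ) * p.1))‖ :=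
    norm_integral_le_integral_norm _
  have h2 : (∫ q : ℝ × ℝ, ‖F (p.1 - q.1, p.2 - q.2) * phi1 q *
      Complex.exp (Real.pi * Complex.I * ((q.1 : ℂ) * p.2 - (q.2 : ℂ) * p.1))‖)
      ≤ ∫ q : ℝ × ℝ, unitSq.indicator (fun _ => (1:ℝ)) q := by
    apply integral_mono_of_nonneg
    · exact Filter.Eventually.of_forall fun q => norm_nonneg _
    · exact (integrable_indicator_iff measurableSet_unitSq).2
        (integrableOn_const (by rw [volume_unitSq]; exact ENNReal.one_ne_top))
    · apply Filter.Eventually.of_forall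
      intro q
      simp only []
      rw [norm_mul, norm_mul, norm_exp_tConv, mul_one]
      by_cases hq : q ∈ unitSq
      · have : phi1 q = 1 := by rw [phi1_eq_indicator, Set.indicator_of_mem hq]
        rw [this, norm_one, mul_one, Set.indicator_of_mem hq]
        exact hF _
      · have : phi1 q = 0 := by rw [phi1_eq_indicator, Set.indicator_of_notMem hq]
        rw [this, norm_zero, mul_zero, Set.indicator_of_notMem hq]
    
  have h3 : (∫ q : ℝ × ℝ, unitSq.indicator (fun _ => (1:ℝ)) q) = 1 := by
    rw [integral_indicator_const _ measurableSet_unitSq, measureReal_def, volume_unitSq]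
    simp
  linarith

lemma norm_phiN_le (n : ℕ) (p : ℝ × ℝ) : ‖phiN n p‖ ≤ 1 := by
  induction n using Nat.strong_induction_on generalizing p with
  | _ n ih =>
    match n with
    | 0 => simp [phiN]
    | 1 => exact norm_phi1_le p
    | (m+2) => exact norm_tConv_phi1_le (fun q => ih (m+1) (by omega) q) p

lemma measurable_tT (k l : ℤ) {φ : ℝ × ℝ → ℂ} (hφ : Measurable φ) :
    Measurable (tT k l φ) := by
  apply Measurable.mul
  · exact Complex.measurable_exp.comp (by fun_prop)
  · exact hφ.comp (by fun_prop)

lemma norm_tT_le (k l : ℤ) {φ : ℝ × ℝ → ℂ} (hφ : ∀ p, ‖φ p‖ ≤ 1) (p : ℝ × ℝ) :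
    ‖tT k l φ p‖ ≤ 1 := by
  rw [tT, norm_mul, norm_exp_tT, one_mul]
  exact hφ _

lemma tConv_tT (k l : ℤ) (F G : ℝ × ℝ → ℂ) :
    tConv (tT k l F) G = tT k l (tConv F G) := by
  funext p
  rw [tT, tConv, tConv, ← integral_const_mul]
  congr 1
  funext q
  simp only [tT]
  have he : Complex.exp (Real.pi * Complex.I * ((l : ℂ) * (p.1 - q.1) - (k : ℂ) * (p.2 - q.2))) *
      Complex.exp (Real.pi * Complex.I * ((q.1 : ℂ) * p.2 - (q.2 : ℂ) * p.1)) =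
      Complex.exp (Real.pi * Complex.I * ((l : ℂ) * p.1 - (k : ℂ) * p.2)) *
      Complex.exp (Real.pi * Complex.I *
        ((q.1 : ℂ) * (p.2 - (l : ℤ)) - (q.2 : ℂ) * (p.1 - (k : ℤ)))) := by
    rw [← Complex.exp_add, ← Complex.exp_add]
    congr 1
    push_cast
    ring
  have harg : ((p.1 - (k:ℤ) - q.1 : ℝ), (p.2 - (l:ℤ) - q.2 : ℝ)) =
      ((p.1 - q.1 - (k:ℤ) : ℝ), (p.2 - q.2 - (l:ℤ) : ℝ)) := by
    simp only [Prod.mk.injEq]; constructor <;> ring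
  push_cast at harg ⊢
  calc (Complex.exp (Real.pi * Complex.I * ((l : ℂ) * (p.1 - q.1) - (k : ℂ) * (p.2 - q.2))) *
          F (p.1 - q.1 - k, p.2 - q.2 - l)) * G q *
        Complex.exp (Real.pi * Complex.I * ((q.1 : ℂ) * p.2 - (q.2 : ℂ) * p.1))
      = (Complex.exp (Real.pi * Complex.I * ((l : ℂ) * (p.1 - q.1) - (k : ℂ) * (p.2 - q.2))) *
          Complex.exp (Real.pi * Complex.I * ((q.1 : ℂ) * p.2 - (q.2 : ℂ) * p.1))) *
          (F (p.1 - q.1 - k, p.2 - q.2 - l) * G q) := by ring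
    _ = _ := by
        rw [he]
        rw [harg]
        ring

lemma integrable_term (n : ℕ) (k l : ℤ) (a : ℂ) (z : ℝ × ℝ) :
    Integrable (fun q : ℝ × ℝ => a * (tT k l (phiN n) (z.1 - q.1, z.2 - q.2) * phi1 q *
      Complex.exp (Real.pi * Complex.I * ((q.1 : ℂ) * z.2 - (q.2 : ℂ) * z.1)))) := by
  apply Integrable.mono' (g := fun q => ‖a‖ * unitSq.indicator (fun _ => (1:ℝ)) q)
  · exact ((integrable_indicator_iff measurableSet_unitSq).2
      (integrableOn_const (by rw [volume_unitSq]; exact ENNReal.one_ne_top))).const_mul _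
  · have m1 : Measurable fun q : ℝ × ℝ => tT k l (phiN n) (z.1 - q.1, z.2 - q.2) :=
      (measurable_tT _ _ (measurable_phiN _)).comp (by fun_prop)
    have m3 : Measurable fun q : ℝ × ℝ =>
        Complex.exp (Real.pi * Complex.I * ((q.1 : ℂ) * z.2 - (q.2 : ℂ) * z.1)) :=
      Complex.measurable_exp.comp (by fun_prop)
    exact (((m1.mul measurable_phi1).mul m3).const_mul a).aestronglyMeasurable
  · apply Filter.Eventually.of_forall
    intro q
    rw [norm_mul, norm_mul, norm_mul, norm_exp_tConv, mul_one]
    apply mul_le_mul_of_nonneg_left _ (norm_nonneg a)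
    by_cases hq : q ∈ unitSq
    · have : phi1 q = 1 := by rw [phi1_eq_indicator, Set.indicator_of_mem hq]
      rw [this, norm_one, mul_one, Set.indicator_of_mem hq]
      exact norm_tT_le _ _ (norm_phiN_le n) _
    · have : phi1 q = 0 := by rw [phi1_eq_indicator, Set.indicator_of_notMem hq]
      rw [this, norm_zero, mul_zero, Set.indicator_of_notMem hq]

lemma sum_tT_succ (n : ℕ) (hn : 1 ≤ n) (s : Finset (ℤ × ℤ)) (c : ℤ × ℤ → ℂ) (z : ℝ × ℝ) :
    (∑ p ∈ s, c p * tT p.1 p.2 (phiN (n+1)) z) =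
      ∫ q : ℝ × ℝ, (∑ p ∈ s, c p * tT p.1 p.2 (phiN n) (z.1 - q.1, z.2 - q.2)) * phi1 q *
        Complex.exp (Real.pi * Complex.I * ((q.1 : ℂ) * z.2 - (q.2 : ℂ) * z.1)) := by
  obtain ⟨m, rfl⟩ : ∃ m, n = m + 1 := ⟨n - 1, by omega⟩
  have hphi : phiN (m + 1 + 1) = tConv (phiN (m + 1)) phi1 := rfl
  calc (∑ p ∈ s, c p * tT p.1 p.2 (phiN (m + 1 + 1)) z)
      = ∑ p ∈ s, c p * tConv (tT p.1 p.2 (phiN (m + 1))) phi1 z := by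
        refine Finset.sum_congr rfl fun p _ => ?_
        rw [hphi, ← tConv_tT]
    _ = ∑ p ∈ s, ∫ q : ℝ × ℝ, c p * (tT p.1 p.2 (phiN (m+1)) (z.1 - q.1, z.2 - q.2) * phi1 q *
          Complex.exp (Real.pi * Complex.I * ((q.1 : ℂ) * z.2 - (q.2 : ℂ) * z.1))) := by
        refine Finset.sum_congr rfl fun p _ => ?_
        rw [tConv, integral_const_mul]
    _ = ∫ q : ℝ × ℝ, ∑ p ∈ s, c p * (tT p.1 p.2 (phiN (m+1)) (z.1 - q.1, z.2 - q.2) * phi1 q *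
          Complex.exp (Real.pi * Complex.I * ((q.1 : ℂ) * z.2 - (q.2 : ℂ) * z.1))) :=
        (integral_finset_sum s fun p _ => integrable_term (m+1) p.1 p.2 (c p) z).symm
    _ = _ := by
        congr 1
        funext q
        rw [Finset.sum_mul, Finset.sum_mul]
        exact Finset.sum_congr rfl fun p _ => by ring

open ENNReal in
lemma enorm_sum_succ_le (n : ℕ) (hn : 1 ≤ n) (s : Finset (ℤ × ℤ)) (c : ℤ × ℤ → ℂ)
    (z : ℝ × ℝ) :
    (‖∑ p ∈ s, c p * tT p.1 p.2 (phiN (n+1)) z‖₊ : ℝ≥0∞) ≤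
      ∫⁻ q : ℝ × ℝ, unitSq.indicator (fun _ => (1:ℝ≥0∞)) q *
        (‖∑ p ∈ s, c p * tT p.1 p.2 (phiN n) (z.1 - q.1, z.2 - q.2)‖₊ : ℝ≥0∞) := by
  rw [sum_tT_succ n hn]
  refine le_trans (enorm_integral_le_lintegral_enorm _) (lintegral_mono fun q => ?_)
  change (‖_‖₊ : ℝ≥0∞) ≤ _
  rw [nnnorm_mul, nnnorm_mul, ENNReal.coe_mul, ENNReal.coe_mul]
  have he : (‖Complex.exp (Real.pi * Complex.I * ((q.1 : ℂ) * z.2 - (q.2 : ℂ) * z.1))‖₊ : ℝ≥0∞)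
      = 1 := by
    rw [← ENNReal.ofReal_coe_nnreal, coe_nnnorm, norm_exp_tConv]; simp
  rw [he, mul_one]
  by_cases hq : q ∈ unitSq
  · have : phi1 q = 1 := by rw [phi1_eq_indicator, Set.indicator_of_mem hq]
    rw [this, Set.indicator_of_mem hq]
    simp [mul_comm]
  · have : phi1 q = 0 := by rw [phi1_eq_indicator, Set.indicator_of_notMem hq]
    rw [this, Set.indicator_of_notMem hq]
    simp

open ENNReal

lemma lintegral_ind_unitSq : (∫⁻ q : ℝ × ℝ, unitSq.indicator (fun _ => (1:ℝ≥0∞)) q) = 1 := by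
  rw [lintegral_indicator_const measurableSet_unitSq, volume_unitSq, mul_one]

lemma sq_lintegral_le {G : ℝ × ℝ → ℝ≥0∞} (hG : Measurable G) :
    (∫⁻ q : ℝ × ℝ, unitSq.indicator (fun _ => (1:ℝ≥0∞)) q * G q) ^ 2 ≤
      ∫⁻ q : ℝ × ℝ, unitSq.indicator (fun _ => (1:ℝ≥0∞)) q * G q ^ 2 := by
  set ind : ℝ × ℝ → ℝ≥0∞ := unitSq.indicator (fun _ => (1:ℝ≥0∞)) with hind
  have hindm : Measurable ind := measurable_const.indicator measurableSet_unitSq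
  have hsq : ∀ q, ind q * ind q = ind q := by
    intro q; by_cases hq : q ∈ unitSq <;> simp [hind, Set.indicator, hq]
  have hconj : Real.HolderConjugate 2 2 := Real.HolderConjugate.two_two
  have h := ENNReal.lintegral_mul_le_Lp_mul_Lq volume hconj
    ((hindm.mul hG).aemeasurable) hindm.aemeasurable
  have e1 : ∀ a, ((fun q => ind q * G q) * ind) a = ind a * G a := by
    intro a
    simp only [Pi.mul_apply]
    rw [mul_right_comm, hsq]
  have e2 : ∀ a, (ind a * G a) ^ (2:ℝ) = ind a * G a ^ 2 := by
    intro a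
    rw [ENNReal.mul_rpow_of_nonneg _ _ (by norm_num : (0:ℝ) ≤ 2),
      show (2:ℝ) = ((2:ℕ):ℝ) by norm_num, ENNReal.rpow_natCast, ENNReal.rpow_natCast,
      pow_two, hsq]
  have e3 : ∀ a, ind a ^ (2:ℝ) = ind a := by
    intro a
    rw [show (2:ℝ) = ((2:ℕ):ℝ) by norm_num, ENNReal.rpow_natCast, pow_two, hsq]
  have hle : (∫⁻ a, ind a * G a) ≤ (∫⁻ a, ind a * G a ^ 2) ^ (1/2:ℝ) := by
    calc (∫⁻ a, ind a * G a) = ∫⁻ a, ((fun q => ind q * G q) * ind) a :=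
          (lintegral_congr e1).symm
      _ ≤ (∫⁻ a, ((fun q => ind q * G q) a) ^ (2:ℝ)) ^ (1/2:ℝ) *
            (∫⁻ a, ind a ^ (2:ℝ)) ^ (1/2:ℝ) := h
      _ = (∫⁻ a, ind a * G a ^ 2) ^ (1/2:ℝ) * 1 := by
          rw [lintegral_congr e2, lintegral_congr e3, lintegral_ind_unitSq, ENNReal.one_rpow]
      _ = _ := mul_one _
  calc (∫⁻ a, ind a * G a) ^ 2 ≤ ((∫⁻ a, ind a * G a ^ 2) ^ (1/2:ℝ)) ^ 2 :=
        pow_le_pow_left₀ zero_le hle 2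
    _ = ∫⁻ a, ind a * G a ^ 2 := by
        rw [← ENNReal.rpow_natCast (_ ^ (1/2:ℝ)) 2, ← ENNReal.rpow_mul]
        norm_num

lemma lintegral_step (n : ℕ) (hn : 1 ≤ n) (s : Finset (ℤ × ℤ)) (c : ℤ × ℤ → ℂ) :
    (∫⁻ z : ℝ × ℝ, (‖∑ p ∈ s, c p * tT p.1 p.2 (phiN (n+1)) z‖₊ : ℝ≥0∞) ^ 2) ≤
      ∫⁻ z : ℝ × ℝ, (‖∑ p ∈ s, c p * tT p.1 p.2 (phiN n) z‖₊ : ℝ≥0∞) ^ 2 := by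
  set G : ℝ × ℝ → ℝ≥0∞ :=
    fun w => (‖∑ p ∈ s, c p * tT p.1 p.2 (phiN n) w‖₊ : ℝ≥0∞) with hG
  set ind : ℝ × ℝ → ℝ≥0∞ := unitSq.indicator (fun _ => (1:ℝ≥0∞)) with hind
  have hGm : Measurable G := by
    apply Measurable.coe_nnreal_ennreal
    apply Measurable.nnnorm
    exact Finset.measurable_sum s fun p _ =>
      ((measurable_tT p.1 p.2 (measurable_phiN n)).const_mul _)
  have hindm : Measurable ind := measurable_const.indicator measurableSet_unitSq
  calc (∫⁻ z : ℝ × ℝ, (‖∑ p ∈ s, c p * tT p.1 p.2 (phiN (n+1)) z‖₊ : ℝ≥0∞) ^ 2)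
      ≤ ∫⁻ z : ℝ × ℝ, (∫⁻ q : ℝ × ℝ, ind q * G (z - q)) ^ 2 := by
        refine lintegral_mono fun z => pow_le_pow_left₀ zero_le ?_ 2
        exact enorm_sum_succ_le n hn s c z
    _ ≤ ∫⁻ z : ℝ × ℝ, ∫⁻ q : ℝ × ℝ, ind q * G (z - q) ^ 2 := by
        refine lintegral_mono fun z => ?_
        exact sq_lintegral_le (hGm.comp (measurable_const.sub measurable_id))
    _ = ∫⁻ q : ℝ × ℝ, ∫⁻ z : ℝ × ℝ, ind q * G (z - q) ^ 2 := by
        apply lintegral_lintegral_swap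
        exact ((hindm.comp measurable_snd).mul
          ((hGm.comp measurable_sub).pow_const 2)).aemeasurable
    _ = ∫⁻ q : ℝ × ℝ, ind q * ∫⁻ z : ℝ × ℝ, G (z - q) ^ 2 := by
        refine lintegral_congr fun q => ?_
        exact lintegral_const_mul _ ((hGm.comp (measurable_id.sub measurable_const)).pow_const 2)
    _ = ∫⁻ q : ℝ × ℝ, ind q * ∫⁻ z : ℝ × ℝ, G z ^ 2 := by
        refine lintegral_congr fun q => ?_
        rw [lintegral_sub_right_eq_self (fun w => G w ^ 2) q]
    _ = (∫⁻ q : ℝ × ℝ, ind q) * ∫⁻ z : ℝ × ℝ, G z ^ 2 := by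
        rw [lintegral_mul_const _ hindm]
    _ = ∫⁻ z : ℝ × ℝ, G z ^ 2 := by
        rw [lintegral_ind_unitSq, one_mul]

def intSq (p : ℤ × ℤ) : Set (ℝ × ℝ) :=
  Set.Ico (p.1 : ℝ) (p.1 + 1) ×ˢ Set.Ico (p.2 : ℝ) (p.2 + 1)

lemma measurableSet_intSq (p : ℤ × ℤ) : MeasurableSet (intSq p) :=
  measurableSet_Ico.prod measurableSet_Ico

lemma volume_intSq (p : ℤ × ℤ) : volume (intSq p) = 1 := by
  rw [intSq, show (volume : Measure (ℝ × ℝ)) = (volume : Measure ℝ).prod volume from rfl,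
    Measure.prod_prod]
  simp

lemma tT_phi1_eq_zero {p : ℤ × ℤ} {z : ℝ × ℝ} (hp : p ≠ (⌊z.1⌋, ⌊z.2⌋)) :
    tT p.1 p.2 phi1 z = 0 := by
  rw [tT, phi1]
  simp only [Set.mem_Ico]
  rw [if_neg, mul_zero]
  rintro ⟨⟨h1, h2⟩, h3, h4⟩
  apply hp
  have e1 : ⌊z.1⌋ = p.1 := Int.floor_eq_iff.2 ⟨by linarith, by linarith⟩
  have e2 : ⌊z.2⌋ = p.2 := Int.floor_eq_iff.2 ⟨by linarith, by linarith⟩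
  exact Prod.ext e1.symm e2.symm

lemma pointwise_base (s : Finset (ℤ × ℤ)) (c : ℤ × ℤ → ℂ) (z : ℝ × ℝ) :
    (‖∑ p ∈ s, c p * tT p.1 p.2 (phiN 1) z‖₊ : ℝ≥0∞) ^ 2 ≤
      ∑ p ∈ s, (‖c p‖₊ : ℝ≥0∞) ^ 2 * (intSq p).indicator (fun _ => (1:ℝ≥0∞)) z := by
  have hphi : phiN 1 = phi1 := rfl
  rw [hphi]
  set a : ℤ × ℤ := (⌊z.1⌋, ⌊z.2⌋) with ha
  by_cases has : a ∈ s
  · have hsum : (∑ p ∈ s, c p * tT p.1 p.2 phi1 z) = c a * tT a.1 a.2 phi1 z :=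
      Finset.sum_eq_single_of_mem a has fun b _ hb => by
        rw [tT_phi1_eq_zero hb, mul_zero]
    have hz : z ∈ intSq a := by
      constructor <;> exact ⟨Int.floor_le _, Int.lt_floor_add_one _⟩
    have hle : (‖∑ p ∈ s, c p * tT p.1 p.2 phi1 z‖₊ : ℝ≥0∞) ^ 2 ≤
        (‖c a‖₊ : ℝ≥0∞) ^ 2 * (intSq a).indicator (fun _ => (1:ℝ≥0∞)) z := by
      rw [hsum, Set.indicator_of_mem hz, mul_one, nnnorm_mul, ENNReal.coe_mul]
      refine pow_le_pow_left₀ zero_le ?_ 2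
      have : (‖tT a.1 a.2 phi1 z‖₊ : ℝ≥0∞) ≤ 1 := by
        rw [← ENNReal.ofReal_coe_nnreal, coe_nnnorm]
        exact ENNReal.ofReal_le_one.2 (norm_tT_le _ _ norm_phi1_le z)
      calc (‖c a‖₊ : ℝ≥0∞) * ‖tT a.1 a.2 phi1 z‖₊ ≤ ‖c a‖₊ * 1 :=
            mul_le_mul_right this _
        _ = _ := mul_one _
    refine hle.trans (Finset.single_le_sum (f := fun p =>
      (‖c p‖₊ : ℝ≥0∞) ^ 2 * (intSq p).indicator (fun _ => (1:ℝ≥0∞)) z)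
      (fun _ _ => zero_le) has)
  · have hsum : (∑ p ∈ s, c p * tT p.1 p.2 phi1 z) = 0 :=
      Finset.sum_eq_zero fun b hb => by
        rw [tT_phi1_eq_zero (fun h => has (by rw [ha, ← h]; exact hb)), mul_zero]
    rw [hsum]
    simp

lemma lintegral_base (s : Finset (ℤ × ℤ)) (c : ℤ × ℤ → ℂ) :
    (∫⁻ z : ℝ × ℝ, (‖∑ p ∈ s, c p * tT p.1 p.2 (phiN 1) z‖₊ : ℝ≥0∞) ^ 2) ≤
      ∑ p ∈ s, (‖c p‖₊ : ℝ≥0∞) ^ 2 := by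
  calc (∫⁻ z : ℝ × ℝ, (‖∑ p ∈ s, c p * tT p.1 p.2 (phiN 1) z‖₊ : ℝ≥0∞) ^ 2)
      ≤ ∫⁻ z : ℝ × ℝ, ∑ p ∈ s,
          (‖c p‖₊ : ℝ≥0∞) ^ 2 * (intSq p).indicator (fun _ => (1:ℝ≥0∞)) z :=
        lintegral_mono (pointwise_base s c)
    _ = ∑ p ∈ s, ∫⁻ z : ℝ × ℝ,
          (‖c p‖₊ : ℝ≥0∞) ^ 2 * (intSq p).indicator (fun _ => (1:ℝ≥0∞)) z :=
        lintegral_finset_sum s fun p _ =>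
          (measurable_const.indicator (measurableSet_intSq p)).const_mul _
    _ = ∑ p ∈ s, (‖c p‖₊ : ℝ≥0∞) ^ 2 := by
        refine Finset.sum_congr rfl fun p _ => ?_
        rw [lintegral_const_mul _ (measurable_const.indicator (measurableSet_intSq p)),
          lintegral_indicator_const (measurableSet_intSq p), volume_intSq, mul_one, mul_one]

theorem phiN_bessel (n : ℕ) (hn : 1 ≤ n) :
    ∃ B : ℝ, 0 < B ∧
      ∀ (s : Finset (ℤ × ℤ)) (c : ℤ × ℤ → ℂ),
        (∫ z : ℝ × ℝ, ‖∑ p ∈ s, c p * tT p.1 p.2 (phiN n) z‖ ^ 2) ≤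
          B * ∑ p ∈ s, ‖c p‖ ^ 2 := by
  refine ⟨1, one_pos, fun s c => ?_⟩
  rw [one_mul]
  -- the lintegral estimate, by induction on n
  have key : ∀ m : ℕ, 1 ≤ m →
      (∫⁻ z : ℝ × ℝ, (‖∑ p ∈ s, c p * tT p.1 p.2 (phiN m) z‖₊ : ℝ≥0∞) ^ 2) ≤
        ∑ p ∈ s, (‖c p‖₊ : ℝ≥0∞) ^ 2 := by
    intro m hm
    induction m, hm using Nat.le_induction with
    | base => exact lintegral_base s c
    | succ m hm ih => exact (lintegral_step m hm s c).trans ih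
  have hmeas : AEStronglyMeasurable
      (fun z : ℝ × ℝ => ‖∑ p ∈ s, c p * tT p.1 p.2 (phiN n) z‖ ^ 2) volume := by
    apply Measurable.aestronglyMeasurable
    exact ((Finset.measurable_sum s fun p _ =>
      (measurable_tT p.1 p.2 (measurable_phiN n)).const_mul _).norm).pow_const 2
  rw [integral_eq_lintegral_of_nonneg_ae
    (Filter.Eventually.of_forall fun z => by positivity) hmeas]
  have hofreal : ∀ z : ℝ × ℝ,
      ENNReal.ofReal (‖∑ p ∈ s, c p * tT p.1 p.2 (phiN n) z‖ ^ 2) =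
        (‖∑ p ∈ s, c p * tT p.1 p.2 (phiN n) z‖₊ : ℝ≥0∞) ^ 2 := by
    intro z
    rw [ENNReal.ofReal_pow (norm_nonneg _), ← ENNReal.ofReal_coe_nnreal, coe_nnnorm]
  rw [lintegral_congr hofreal]
  have hne : ∀ p ∈ s, (‖c p‖₊ : ℝ≥0∞) ^ 2 ≠ ∞ := fun p _ =>
    (ENNReal.pow_lt_top ENNReal.coe_lt_top).ne
  calc (∫⁻ z : ℝ × ℝ, (‖∑ p ∈ s, c p * tT p.1 p.2 (phiN n) z‖₊ : ℝ≥0∞) ^ 2).toReal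
      ≤ (∑ p ∈ s, (‖c p‖₊ : ℝ≥0∞) ^ 2).toReal :=
        ENNReal.toReal_mono (by rw [← lt_top_iff_ne_top, ENNReal.sum_lt_top]
                                exact fun p hp => (hne p hp).lt_top) (key n hn)
    _ = ∑ p ∈ s, ‖c p‖ ^ 2 := by
        rw [ENNReal.toReal_sum hne]
        refine Finset.sum_congr rfl fun p _ => ?_
        rw [ENNReal.toReal_pow, ENNReal.coe_toReal, coe_nnnorm]
end
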